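/- arXiv:1402.4360 — 2 statements merged into one kernel-verified Lean document; each statement's English description precedes it below -/
import Mathlib

section
/- Let κ be a primitive from 𝒜 × ℬ to 𝒰 × 𝒱 that fails the completeness condition. Let R and S be finite-valued random variables on a probability space such that the pair (R,S) is trivial, let f : range(R) → 𝒜 and g : range(S) → ℬ be deterministic functions, set A = f ∘ R and B = g ∘ S, and let (U,V) be generated by one use of κ with inputs (A,B) and side information ⟨R,S⟩. Then the pair (⟨R,U⟩, ⟨S,V⟩) is trivial. -/
open MeasureTheory Real
open scoped ENNReal

namespace SecureComputation

variable {Ω : Type*} [MeasurableSpace Ω]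

/-- The pair random variable `⟨X,Y⟩`. -/
def pair {𝒳 𝒴 : Type*} (X : Ω → 𝒳) (Y : Ω → 𝒴) : Ω → 𝒳 × 𝒴 := fun ω => (X ω, Y ω)

/-- Shannon entropy `H[X]` of a finite-valued random variable. -/
noncomputable def ent {𝒳 : Type*} (μ : Measure Ω) (X : Ω → 𝒳) : ℝ :=
  ∑' x : 𝒳, negMulLog ((μ (X ⁻¹' {x})).toReal)

/-- Mutual information `I[X;Y]`. -/
noncomputable def mi {𝒳 𝒴 : Type*} (μ : Measure Ω) (X : Ω → 𝒳) (Y : Ω → 𝒴) : ℝ :=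
  ent μ X + ent μ Y - ent μ (pair X Y)

/-- Conditional mutual information `I[X;Y|Z]`. -/
noncomputable def cmi {𝒳 𝒴 𝒵 : Type*} (μ : Measure Ω) (X : Ω → 𝒳) (Y : Ω → 𝒴)
    (Z : Ω → 𝒵) : ℝ :=
  ent μ (pair X Z) + ent μ (pair Y Z) - ent μ (pair (pair X Y) Z) - ent μ Z

/-- Conditional entropy `H[X|Y]`. -/
noncomputable def condEnt {𝒳 𝒴 : Type*} (μ : Measure Ω) (X : Ω → 𝒳) (Y : Ω → 𝒴) : ℝ :=
  ent μ (pair X Y) - ent μ Y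

/-- A finite-valued random variable: preimages of points are measurable. -/
def DiscreteRV {𝒳 : Type*} (X : Ω → 𝒳) : Prop := ∀ x, MeasurableSet (X ⁻¹' {x})

/-- The pair `(X,Y)` is trivial: some finite-valued `Z` on the same space has
`I[X;Y|Z] = 0`, `I[Z;X|Y] = 0`, `I[Z;Y|X] = 0`. -/
def IsTrivialPair {𝒳 𝒴 : Type*} (μ : Measure Ω) (X : Ω → 𝒳) (Y : Ω → 𝒴) : Prop :=
  ∃ (𝒵 : Type) (_ : Fintype 𝒵) (Z : Ω → 𝒵), DiscreteRV Z ∧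
    cmi μ X Y Z = 0 ∧ cmi μ Z X Y = 0 ∧ cmi μ Z Y X = 0

/-- `(U,V)` is generated by one use of the primitive `κ` with inputs `(A,B)` and
side information `T`. -/
def GeneratedBy {𝒜 ℬ 𝒰 𝒱 𝒯 : Type*} (μ : Measure Ω) (κ : 𝒜 × ℬ → PMF (𝒰 × 𝒱))
    (A : Ω → 𝒜) (B : Ω → ℬ) (U : Ω → 𝒰) (V : Ω → 𝒱) (T : Ω → 𝒯) : Prop :=
  ∀ (t : 𝒯) (a : 𝒜) (b : ℬ) (u : 𝒰) (v : 𝒱),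
    μ {ω | T ω = t ∧ A ω = a ∧ B ω = b ∧ U ω = u ∧ V ω = v} =
      μ {ω | T ω = t ∧ A ω = a ∧ B ω = b} * κ (a, b) (u, v)

/-- The primitive `κ` fails the completeness condition: whenever its inputs are
independent and uniformly distributed and `(U,V)` is generated by one use of `κ`
(with constant side information), the pair `(⟨A,U⟩, ⟨B,V⟩)` is trivial. -/
def FailsCompleteness {𝒜 ℬ 𝒰 𝒱 : Type} (κ : 𝒜 × ℬ → PMF (𝒰 × 𝒱)) : Prop :=
  ∀ (Ω' : Type) (_ : MeasurableSpace Ω') (μ : Measure Ω'), IsProbabilityMeasure μ →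
    ∀ (A : Ω' → 𝒜) (B : Ω' → ℬ) (U : Ω' → 𝒰) (V : Ω' → 𝒱),
      DiscreteRV A → DiscreteRV B → DiscreteRV U → DiscreteRV V →
      (∀ (a : 𝒜) (b : ℬ), μ {ω | A ω = a ∧ B ω = b} =
        ((Nat.card 𝒜 : ℝ≥0∞) * (Nat.card ℬ : ℝ≥0∞))⁻¹) →
      GeneratedBy μ κ A B U V (fun _ => ()) →
      IsTrivialPair μ (pair A U) (pair B V)




/-- Gibbs' inequality equality case. -/
lemma gibbs {ι : Type*} [Fintype ι] (a b : ι → ℝ) (ha : ∀ i, 0 ≤ a i) (hb : ∀ i, 0 ≤ b i)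
    (hab : ∀ i, a i ≠ 0 → b i ≠ 0) (hsum : ∑ i, a i = ∑ i, b i) :
    (∑ i, a i * Real.log (a i / b i)) = 0 ↔ ∀ i, a i = b i := by
  have key : ∀ i, a i - b i ≤ a i * Real.log (a i / b i) := by
    intro i
    rcases eq_or_ne (a i) 0 with h0 | h0
    · simp [h0]; exact hb i
    · have hai : 0 < a i := (ha i).lt_of_ne (Ne.symm h0)
      have hbi : 0 < b i := (hb i).lt_of_ne (Ne.symm (hab i h0))
      have hlog : Real.log (b i / a i) ≤ b i / a i - 1 :=
        Real.log_le_sub_one_of_pos (by positivity)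
      have : a i * Real.log (a i / b i) = -(a i * Real.log (b i / a i)) := by
        rw [show a i / b i = (b i / a i)⁻¹ by rw [inv_div], Real.log_inv]; ring
      rw [this]
      have := mul_le_mul_of_nonneg_left hlog (ha i)
      have haa : a i * (b i / a i - 1) = b i - a i := by field_simp
      nlinarith
  constructor
  · intro hz i
    have hterm : ∀ j, a j * Real.log (a j / b j) = a j - b j := by
      have hsum0 : ∑ j, (a j * Real.log (a j / b j) - (a j - b j)) = 0 := by
        rw [Finset.sum_sub_distrib, hz, Finset.sum_sub_distrib, hsum]; ring
      have := (Finset.sum_eq_zero_iff_of_nonneg (fun j _ => by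
        have := key j; linarith)).mp hsum0
      intro j; have := this j (Finset.mem_univ j); linarith
    rcases eq_or_ne (a i) 0 with h0 | h0
    · have := hterm i; rw [h0] at this; simp at this; linarith [this]
    · by_contra hne
      have hai : 0 < a i := (ha i).lt_of_ne (Ne.symm h0)
      have hbi : 0 < b i := (hb i).lt_of_ne (Ne.symm (hab i h0))
      have hba : b i / a i ≠ 1 := by
        intro h; apply hne; field_simp at h; linarith
      have hlog : Real.log (b i / a i) < b i / a i - 1 :=
        Real.log_lt_sub_one_of_pos (by positivity) hba
      have hrw : a i * Real.log (a i / b i) = -(a i * Real.log (b i / a i)) := by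
        rw [show a i / b i = (b i / a i)⁻¹ by rw [inv_div], Real.log_inv]; ring
      have := hterm i
      rw [hrw] at this
      have := mul_lt_mul_of_pos_left hlog hai
      have haa : a i * (b i / a i - 1) = b i - a i := by field_simp
      nlinarith
  · intro h
    apply Finset.sum_eq_zero
    intro i _
    rcases eq_or_ne (a i) 0 with h0 | h0
    · simp [h0]
    · rw [h i, div_self (hab i h0), Real.log_one, mul_zero]


lemma pair_preimage {𝒳 𝒴 : Type*} (X : Ω → 𝒳) (Y : Ω → 𝒴) (x : 𝒳) (y : 𝒴) :
    pair X Y ⁻¹' {(x, y)} = X ⁻¹' {x} ∩ Y ⁻¹' {y} := by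
  ext ω; simp [pair, Set.mem_preimage]

lemma DiscreteRV.pair {𝒳 𝒴 : Type*} {X : Ω → 𝒳} {Y : Ω → 𝒴}
    (hX : DiscreteRV X) (hY : DiscreteRV Y) : DiscreteRV (SecureComputation.pair X Y) := by
  rintro ⟨x, y⟩; rw [pair_preimage]; exact (hX x).inter (hY y)

lemma DiscreteRV.comp {𝒳 𝒴 : Type*} [Fintype 𝒳] {X : Ω → 𝒳} (hX : DiscreteRV X)
    (ζ : 𝒳 → 𝒴) : DiscreteRV (fun ω => ζ (X ω)) := by
  intro y
  have : (fun ω => ζ (X ω)) ⁻¹' {y} = ⋃ x ∈ {x : 𝒳 | ζ x = y}, X ⁻¹' {x} := by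
    ext ω; simp
  rw [this]
  exact MeasurableSet.biUnion (Set.to_countable _) (fun x _ => hX x)

/-- Decompose a measurable set along the fibers of a discrete random variable. -/
lemma meas_fiber {𝒴 : Type*} [Fintype 𝒴] {Y : Ω → 𝒴} (hY : DiscreteRV Y)
    {t : Set Ω} (ht : MeasurableSet t) (μ : Measure Ω) :
    μ t = ∑ y, μ (t ∩ Y ⁻¹' {y}) := by
  have hdec : t = ⋃ y ∈ (Finset.univ : Finset 𝒴), t ∩ Y ⁻¹' {y} := by
    ext ω; simp
  have := measure_biUnion_finset (μ := μ)
    (s := (Finset.univ : Finset 𝒴)) (f := fun y => t ∩ Y ⁻¹' {y})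
    (by
      intro y _ y' _ hyy
      simp only [Function.onFun]
      apply Set.disjoint_left.mpr
      rintro ω ⟨-, h1⟩ ⟨-, h2⟩
      simp only [Set.mem_preimage, Set.mem_singleton_iff] at h1 h2
      exact hyy (h1 ▸ h2 ▸ rfl))
    (fun y _ => ht.inter (hY y))
  rw [← this, ← hdec]

lemma meas_fiber_real {𝒴 : Type*} [Fintype 𝒴] {Y : Ω → 𝒴} (hY : DiscreteRV Y)
    {t : Set Ω} (ht : MeasurableSet t) (μ : Measure Ω) [IsFiniteMeasure μ] :
    (μ t).toReal = ∑ y, (μ (t ∩ Y ⁻¹' {y})).toReal := by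
  rw [meas_fiber hY ht μ, ENNReal.toReal_sum (fun y _ => measure_ne_top μ _)]

lemma neg_sum_mul {ι : Type*} [Fintype ι] (f : ι → ℝ) (c : ℝ) :
    -(∑ i, f i) * c = ∑ i, -(f i) * c := by
  rw [neg_mul, Finset.sum_mul, ← Finset.sum_neg_distrib]
  exact Finset.sum_congr rfl (fun i _ => by ring)

lemma negMulLog_sum {ι : Type*} [Fintype ι] (f : ι → ℝ) (c : ℝ) (h : c = ∑ i, f i) :
    negMulLog c = ∑ i, -(f i) * Real.log c := by
  simp only [negMulLog]
  nth_rewrite 1 [h]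
  exact neg_sum_mul f (Real.log c)

/-- The fundamental characterization: vanishing of conditional mutual information is
equivalent to pointwise factorization of the joint distribution. -/
lemma cmi_eq_zero_iff {𝒳 𝒴 𝒵 : Type*} [Fintype 𝒳] [Fintype 𝒴] [Fintype 𝒵]
    (μ : Measure Ω) [IsFiniteMeasure μ] {X : Ω → 𝒳} {Y : Ω → 𝒴} {Z : Ω → 𝒵}
    (hX : DiscreteRV X) (hY : DiscreteRV Y) (hZ : DiscreteRV Z) :
    cmi μ X Y Z = 0 ↔ ∀ x y z,
      (μ (X ⁻¹' {x} ∩ Y ⁻¹' {y} ∩ Z ⁻¹' {z})).toReal * (μ (Z ⁻¹' {z})).toReal =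
      (μ (X ⁻¹' {x} ∩ Z ⁻¹' {z})).toReal * (μ (Y ⁻¹' {y} ∩ Z ⁻¹' {z})).toReal := by
  classical
  set p : 𝒳 → 𝒴 → 𝒵 → ℝ :=
    fun x y z => (μ (X ⁻¹' {x} ∩ Y ⁻¹' {y} ∩ Z ⁻¹' {z})).toReal with hp
  set pXZ : 𝒳 → 𝒵 → ℝ := fun x z => (μ (X ⁻¹' {x} ∩ Z ⁻¹' {z})).toReal with hpXZ
  set pYZ : 𝒴 → 𝒵 → ℝ := fun y z => (μ (Y ⁻¹' {y} ∩ Z ⁻¹' {z})).toReal with hpYZ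
  set pZ : 𝒵 → ℝ := fun z => (μ (Z ⁻¹' {z})).toReal with hpZ
  have hpnn : ∀ x y z, 0 ≤ p x y z := fun _ _ _ => ENNReal.toReal_nonneg
  have hpXZnn : ∀ x z, 0 ≤ pXZ x z := fun _ _ => ENNReal.toReal_nonneg
  have hpYZnn : ∀ y z, 0 ≤ pYZ y z := fun _ _ => ENNReal.toReal_nonneg
  have hpZnn : ∀ z, 0 ≤ pZ z := fun _ => ENNReal.toReal_nonneg
  -- marginals
  have mXZ : ∀ x z, pXZ x z = ∑ y, p x y z := by
    intro x z
    rw [hpXZ]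
    simp only
    rw [meas_fiber_real hY ((hX x).inter (hZ z)) μ]
    apply Finset.sum_congr rfl
    intro y _
    rw [show X ⁻¹' {x} ∩ Z ⁻¹' {z} ∩ Y ⁻¹' {y} = X ⁻¹' {x} ∩ Y ⁻¹' {y} ∩ Z ⁻¹' {z} by
      ext ω; simp only [Set.mem_inter_iff]; tauto]
  have mYZ : ∀ y z, pYZ y z = ∑ x, p x y z := by
    intro y z
    rw [hpYZ]
    simp only
    rw [meas_fiber_real hX ((hY y).inter (hZ z)) μ]
    apply Finset.sum_congr rfl
    intro x _
    rw [show Y ⁻¹' {y} ∩ Z ⁻¹' {z} ∩ X ⁻¹' {x} = X ⁻¹' {x} ∩ Y ⁻¹' {y} ∩ Z ⁻¹' {z} by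
      ext ω; simp only [Set.mem_inter_iff]; tauto]
  have mZX : ∀ z, pZ z = ∑ x, pXZ x z := by
    intro z
    rw [hpZ]
    simp only
    rw [meas_fiber_real hX (hZ z) μ]
    apply Finset.sum_congr rfl
    intro x _
    rw [show Z ⁻¹' {z} ∩ X ⁻¹' {x} = X ⁻¹' {x} ∩ Z ⁻¹' {z} from Set.inter_comm _ _]
  have mZY : ∀ z, pZ z = ∑ y, pYZ y z := by
    intro z
    rw [hpZ]
    simp only
    rw [meas_fiber_real hY (hZ z) μ]
    apply Finset.sum_congr rfl
    intro y _
    rw [show Z ⁻¹' {z} ∩ Y ⁻¹' {y} = Y ⁻¹' {y} ∩ Z ⁻¹' {z} from Set.inter_comm _ _]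
  -- bounds
  have hple : ∀ x y z, p x y z ≤ pXZ x z := by
    intro x y z
    rw [mXZ]
    exact Finset.single_le_sum (fun y' _ => hpnn x y' z) (Finset.mem_univ y)
  have hpleY : ∀ x y z, p x y z ≤ pYZ y z := by
    intro x y z
    rw [mYZ]
    exact Finset.single_le_sum (fun x' _ => hpnn x' y z) (Finset.mem_univ x)
  have hXZle : ∀ x z, pXZ x z ≤ pZ z := by
    intro x z
    rw [mZX]
    exact Finset.single_le_sum (fun x' _ => hpXZnn x' z) (Finset.mem_univ x)
  have hYZle : ∀ y z, pYZ y z ≤ pZ z := by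
    intro y z
    rw [mZY]
    exact Finset.single_le_sum (fun y' _ => hpYZnn y' z) (Finset.mem_univ y)
  -- the comparison density
  set b : 𝒳 → 𝒴 → 𝒵 → ℝ :=
    fun x y z => if pZ z = 0 then 0 else pXZ x z * pYZ y z / pZ z with hb
  have hbnn : ∀ x y z, 0 ≤ b x y z := by
    intro x y z
    rw [hb]
    dsimp only
    split
    · exact le_refl 0
    · exact div_nonneg (mul_nonneg (hpXZnn x z) (hpYZnn y z)) (hpZnn z)
  have hbpos : ∀ x y z, p x y z ≠ 0 →
      0 < pXZ x z ∧ 0 < pYZ y z ∧ 0 < pZ z ∧ b x y z = pXZ x z * pYZ y z / pZ z := by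
    intro x y z h0
    have hp0 : 0 < p x y z := (hpnn x y z).lt_of_ne (Ne.symm h0)
    have h1 : 0 < pXZ x z := lt_of_lt_of_le hp0 (hple x y z)
    have h2 : 0 < pYZ y z := lt_of_lt_of_le hp0 (hpleY x y z)
    have h3 : 0 < pZ z := lt_of_lt_of_le h1 (hXZle x z)
    exact ⟨h1, h2, h3, by rw [hb]; simp only; rw [if_neg (ne_of_gt h3)]⟩
  have hab : ∀ x y z, p x y z ≠ 0 → b x y z ≠ 0 := by
    intro x y z h0
    obtain ⟨h1, h2, h3, h4⟩ := hbpos x y z h0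
    rw [h4]
    positivity
  -- sum of b equals sum of p (both marginalise to pZ)
  have hbZ : ∀ z, (∑ x, ∑ y, b x y z) = pZ z := by
    intro z
    rcases eq_or_ne (pZ z) 0 with h0 | h0
    · rw [h0]
      apply Finset.sum_eq_zero
      intro x _
      apply Finset.sum_eq_zero
      intro y _
      rw [hb]
      simp only
      rw [if_pos h0]
    · have hx : ∀ x, (∑ y, b x y z) = pXZ x z := by
        intro x
        have hby : ∀ y, b x y z = pXZ x z * pYZ y z / pZ z := by
          intro y; rw [hb]; simp only; rw [if_neg h0]
        rw [Finset.sum_congr rfl (fun y _ => hby y), ← Finset.sum_div, ← Finset.mul_sum,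
          ← mZY z, mul_div_assoc, div_self h0, mul_one]
      rw [Finset.sum_congr rfl (fun x _ => hx x), ← mZX z]
  have hpZsum : ∀ z, (∑ x, ∑ y, p x y z) = pZ z := by
    intro z
    rw [mZX z]
    exact Finset.sum_congr rfl (fun x _ => (mXZ x z).symm)
  -- entropy expansions
  have entXZ : ent μ (pair X Z) = ∑ x, ∑ z, negMulLog (pXZ x z) := by
    rw [ent, tsum_fintype, Fintype.sum_prod_type]
    exact Finset.sum_congr rfl (fun x _ => Finset.sum_congr rfl (fun z _ => by
      rw [pair_preimage]))
  have entYZ : ent μ (pair Y Z) = ∑ y, ∑ z, negMulLog (pYZ y z) := by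
    rw [ent, tsum_fintype, Fintype.sum_prod_type]
    exact Finset.sum_congr rfl (fun y _ => Finset.sum_congr rfl (fun z _ => by
      rw [pair_preimage]))
  have entZ : ent μ Z = ∑ z, negMulLog (pZ z) := by
    rw [ent, tsum_fintype]
  have entXYZ : ent μ (pair (pair X Y) Z) = ∑ x, ∑ y, ∑ z, negMulLog (p x y z) := by
    rw [ent, tsum_fintype, Fintype.sum_prod_type, Fintype.sum_prod_type]
    exact Finset.sum_congr rfl (fun x _ => Finset.sum_congr rfl (fun y _ =>
      Finset.sum_congr rfl (fun z _ => by rw [pair_preimage, pair_preimage])))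
  -- rewrite each entropy as a triple sum
  have TXZ : (∑ x, ∑ z, negMulLog (pXZ x z)) =
      ∑ x, ∑ y, ∑ z, (-(p x y z) * Real.log (pXZ x z)) := by
    apply Finset.sum_congr rfl
    intro x _
    rw [Finset.sum_comm]
    apply Finset.sum_congr rfl
    intro z _
    exact negMulLog_sum (fun y => p x y z) (pXZ x z) (mXZ x z)
  have TYZ : (∑ y, ∑ z, negMulLog (pYZ y z)) =
      ∑ x, ∑ y, ∑ z, (-(p x y z) * Real.log (pYZ y z)) := by
    calc (∑ y, ∑ z, negMulLog (pYZ y z))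
        = ∑ y, ∑ z, ∑ x, (-(p x y z) * Real.log (pYZ y z)) :=
          Finset.sum_congr rfl (fun y _ => Finset.sum_congr rfl (fun z _ =>
            negMulLog_sum (fun x => p x y z) (pYZ y z) (mYZ y z)))
      _ = ∑ y, ∑ x, ∑ z, (-(p x y z) * Real.log (pYZ y z)) :=
          Finset.sum_congr rfl (fun y _ => Finset.sum_comm)
      _ = ∑ x, ∑ y, ∑ z, (-(p x y z) * Real.log (pYZ y z)) := Finset.sum_comm
  have TZ : (∑ z, negMulLog (pZ z)) =
      ∑ x, ∑ y, ∑ z, (-(p x y z) * Real.log (pZ z)) := by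
    have : ∀ z, negMulLog (pZ z) = ∑ x, ∑ y, (-(p x y z) * Real.log (pZ z)) := by
      intro z
      rw [negMulLog_sum (fun x => ∑ y, p x y z) (pZ z) (hpZsum z).symm]
      exact Finset.sum_congr rfl (fun x _ => neg_sum_mul (fun y => p x y z) _)
    rw [Finset.sum_congr rfl (fun z _ => this z)]
    rw [Finset.sum_comm]
    apply Finset.sum_congr rfl
    intro x _
    rw [Finset.sum_comm]
  -- the per-point combination
  have hcmi : cmi μ X Y Z =
      ∑ x, ∑ y, ∑ z, (p x y z * Real.log (p x y z / b x y z)) := by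
    rw [cmi, entXZ, entYZ, entZ, entXYZ, TXZ, TYZ, TZ]
    rw [← Finset.sum_add_distrib, ← Finset.sum_sub_distrib, ← Finset.sum_sub_distrib]
    apply Finset.sum_congr rfl
    intro x _
    rw [← Finset.sum_add_distrib, ← Finset.sum_sub_distrib, ← Finset.sum_sub_distrib]
    apply Finset.sum_congr rfl
    intro y _
    rw [← Finset.sum_add_distrib, ← Finset.sum_sub_distrib, ← Finset.sum_sub_distrib]
    apply Finset.sum_congr rfl
    intro z _
    rcases eq_or_ne (p x y z) 0 with h0 | h0
    · rw [h0]; simp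
    · obtain ⟨h1, h2, h3, h4⟩ := hbpos x y z h0
      rw [h4, negMulLog]
      rw [Real.log_div h0 (by positivity), Real.log_div (by positivity) (ne_of_gt h3),
        Real.log_mul (ne_of_gt h1) (ne_of_gt h2)]
      ring
  -- reorder helper
  have reorder : ∀ (F : 𝒳 → 𝒴 → 𝒵 → ℝ),
      (∑ x, ∑ y, ∑ z, F x y z) = ∑ z, ∑ x, ∑ y, F x y z := by
    intro F
    calc (∑ x, ∑ y, ∑ z, F x y z)
        = ∑ x, ∑ z, ∑ y, F x y z := Finset.sum_congr rfl (fun x _ => Finset.sum_comm)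
      _ = ∑ z, ∑ x, ∑ y, F x y z := Finset.sum_comm
  -- apply Gibbs
  have hgibbs := gibbs (ι := 𝒳 × 𝒴 × 𝒵) (fun i => p i.1 i.2.1 i.2.2)
    (fun i => b i.1 i.2.1 i.2.2) (fun i => hpnn _ _ _) (fun i => hbnn _ _ _)
    (fun i => hab _ _ _)
    (by
      simp only [Fintype.sum_prod_type]
      rw [reorder (fun x y z => p x y z), reorder (fun x y z => b x y z)]
      exact Finset.sum_congr rfl (fun z _ => by rw [hpZsum z, hbZ z]))
  have hps : (∑ i : 𝒳 × 𝒴 × 𝒵,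
      p i.1 i.2.1 i.2.2 * Real.log (p i.1 i.2.1 i.2.2 / b i.1 i.2.1 i.2.2)) =
      ∑ x, ∑ y, ∑ z, (p x y z * Real.log (p x y z / b x y z)) := by
    simp only [Fintype.sum_prod_type]
  constructor
  · intro h0
    have hpb : ∀ i : 𝒳 × 𝒴 × 𝒵, p i.1 i.2.1 i.2.2 = b i.1 i.2.1 i.2.2 := by
      apply hgibbs.mp
      rw [hps, ← hcmi]
      exact h0
    intro x y z
    have hpb' : p x y z = b x y z := hpb (x, y, z)
    rcases eq_or_ne (pZ z) 0 with hz0 | hz0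
    · have hXZ0 : pXZ x z = 0 := le_antisymm (hz0 ▸ hXZle x z) (hpXZnn x z)
      show p x y z * pZ z = pXZ x z * pYZ y z
      rw [hz0, hXZ0, mul_zero, zero_mul]
    · have hb' : b x y z = pXZ x z * pYZ y z / pZ z := by
        rw [hb]; simp only; rw [if_neg hz0]
      show p x y z * pZ z = pXZ x z * pYZ y z
      rw [hpb', hb']
      field_simp
  · intro hfac
    rw [hcmi, ← hps]
    apply hgibbs.mpr
    rintro ⟨x, y, z⟩
    simp only
    have hfac' : p x y z * pZ z = pXZ x z * pYZ y z := hfac x y z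
    rcases eq_or_ne (pZ z) 0 with hz0 | hz0
    · have hXZ0 : pXZ x z = 0 := le_antisymm (hz0 ▸ hXZle x z) (hpXZnn x z)
      have hp0 : p x y z = 0 :=
        le_antisymm (hXZ0 ▸ hple x y z) (hpnn x y z)
      rw [hp0, hb]
      simp only
      rw [if_pos hz0]
    · have hb' : b x y z = pXZ x z * pYZ y z / pZ z := by
        rw [hb]; simp only; rw [if_neg hz0]
      rw [hb', ← hfac']
      field_simp


section Components

variable {𝓡 𝓢 : Type*} [Fintype 𝓡] [Fintype 𝓢]

/-- Two rows are related if some column has positive mass in both. -/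
def relR (p2 : 𝓡 → 𝓢 → ℝ) (r r' : 𝓡) : Prop := ∃ s, p2 r s ≠ 0 ∧ p2 r' s ≠ 0

/-- The connected component of a row in the bipartite support graph. -/
noncomputable def comp (p2 : 𝓡 → 𝓢 → ℝ) (r : 𝓡) : Finset 𝓡 := by
  classical exact Finset.univ.filter (fun r' => Relation.ReflTransGen (relR p2) r r')

/-- The component attached to a column. -/
noncomputable def sComp (p2 : 𝓡 → 𝓢 → ℝ) (s : 𝓢) : Finset 𝓡 := by
  classical exact if h : ∃ r, p2 r s ≠ 0 then comp p2 h.choose else ∅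

lemma relR_symm (p2 : 𝓡 → 𝓢 → ℝ) {r r' : 𝓡} (h : relR p2 r r') : relR p2 r' r := by
  obtain ⟨s, h1, h2⟩ := h; exact ⟨s, h2, h1⟩

lemma mem_comp {p2 : 𝓡 → 𝓢 → ℝ} {r r' : 𝓡} :
    r' ∈ comp p2 r ↔ Relation.ReflTransGen (relR p2) r r' := by
  simp [comp]

lemma mem_comp_self (p2 : 𝓡 → 𝓢 → ℝ) (r : 𝓡) : r ∈ comp p2 r :=
  mem_comp.mpr Relation.ReflTransGen.refl

lemma comp_eq_of_rtg {p2 : 𝓡 → 𝓢 → ℝ} {r r' : 𝓡}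
    (h : Relation.ReflTransGen (relR p2) r r') : comp p2 r = comp p2 r' := by
  have hsymm : Symmetric (Relation.ReflTransGen (relR p2)) :=
    by haveI : Std.Symm (relR p2) := ⟨fun _ _ hh => relR_symm p2 hh⟩
       exact fun _ _ h => Std.Symm.symm _ _ h
  ext r''
  rw [mem_comp, mem_comp]
  constructor
  · intro h2; exact Relation.ReflTransGen.trans (hsymm h) h2
  · intro h2; exact Relation.ReflTransGen.trans h h2

lemma rtg_of_comp_eq {p2 : 𝓡 → 𝓢 → ℝ} {r r' : 𝓡}
    (h : comp p2 r = comp p2 r') : Relation.ReflTransGen (relR p2) r r' :=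
  mem_comp.mp (h ▸ mem_comp_self p2 r')

lemma comp_eq_of_mem {p2 : 𝓡 → 𝓢 → ℝ} {r r' : 𝓡} (h : r' ∈ comp p2 r) :
    comp p2 r' = comp p2 r := (comp_eq_of_rtg (mem_comp.mp h)).symm

lemma comp_eq_edge {p2 : 𝓡 → 𝓢 → ℝ} {r r' : 𝓡} {s : 𝓢}
    (h1 : p2 r s ≠ 0) (h2 : p2 r' s ≠ 0) : comp p2 r = comp p2 r' :=
  comp_eq_of_rtg (Relation.ReflTransGen.single ⟨s, h1, h2⟩)

lemma sComp_eq {p2 : 𝓡 → 𝓢 → ℝ} {r : 𝓡} {s : 𝓢} (h : p2 r s ≠ 0) :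
    sComp p2 s = comp p2 r := by
  rw [sComp]
  have hex : ∃ r', p2 r' s ≠ 0 := ⟨r, h⟩
  simp only [dif_pos hex]
  exact comp_eq_edge hex.choose_spec h

lemma sComp_ne_comp_of_zero {p2 : 𝓡 → 𝓢 → ℝ} {r : 𝓡} {s : 𝓢}
    (h : sComp p2 s ≠ comp p2 r) : p2 r s = 0 := by
  by_contra hne
  exact h (sComp_eq hne)

/-- The product-form factorization of a trivial pair through its common part. -/
lemma mainfact {𝒵h : Type*} [Fintype 𝒵h]
    (t : 𝓡 → 𝓢 → 𝒵h → ℝ) (htnn : ∀ r s z, 0 ≤ t r s z)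
    (p2 : 𝓡 → 𝓢 → ℝ) (hp2 : ∀ r s, p2 r s = ∑ z, t r s z)
    (E1 : ∀ r s z, t r s z * (∑ r', ∑ s', t r' s' z) =
      (∑ s', t r s' z) * (∑ r', t r' s z))
    (E2 : ∀ r s z, t r s z * (∑ r', p2 r' s) = (∑ r', t r' s z) * p2 r s)
    (E3 : ∀ r s z, t r s z * (∑ s', p2 r s') = (∑ s', t r s' z) * p2 r s) :
    ∀ r s, sComp p2 s = comp p2 r →
      p2 r s * (∑ r' ∈ comp p2 r, ∑ s', p2 r' s') =
        (∑ s', p2 r s') * (∑ r', p2 r' s) := by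
  classical
  set pR : 𝓡 → ℝ := fun r => ∑ s, p2 r s with hpR
  set pS : 𝓢 → ℝ := fun s => ∑ r, p2 r s with hpS
  set tRZ : 𝓡 → 𝒵h → ℝ := fun r z => ∑ s, t r s z with htRZ
  set tSZ : 𝓢 → 𝒵h → ℝ := fun s z => ∑ r, t r s z with htSZ
  set pZ : 𝒵h → ℝ := fun z => ∑ r, ∑ s, t r s z with hpZ
  have E1' : ∀ r s z, t r s z * pZ z = tRZ r z * tSZ s z := fun r s z => E1 r s z
  have E2' : ∀ r s z, t r s z * pS s = tSZ s z * p2 r s := fun r s z => E2 r s z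
  have E3' : ∀ r s z, t r s z * pR r = tRZ r z * p2 r s := fun r s z => E3 r s z
  have hp2nn : ∀ r s, 0 ≤ p2 r s := by
    intro r s; rw [hp2]; exact Finset.sum_nonneg (fun z _ => htnn r s z)
  have hpRnn : ∀ r, 0 ≤ pR r := fun r => Finset.sum_nonneg (fun s _ => hp2nn r s)
  have hpSnn : ∀ s, 0 ≤ pS s := fun s => Finset.sum_nonneg (fun r _ => hp2nn r s)
  have hp2R : ∀ r s, p2 r s ≤ pR r :=
    fun r s => Finset.single_le_sum (fun s' _ => hp2nn r s') (Finset.mem_univ s)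
  have hp2S : ∀ r s, p2 r s ≤ pS s :=
    fun r s => Finset.single_le_sum (fun r' _ => hp2nn r' s) (Finset.mem_univ r)
  have htRZnn : ∀ r z, 0 ≤ tRZ r z := fun r z => Finset.sum_nonneg (fun s _ => htnn r s z)
  have htSZnn : ∀ s z, 0 ≤ tSZ s z := fun s z => Finset.sum_nonneg (fun r _ => htnn r s z)
  have hpZnn : ∀ z, 0 ≤ pZ z :=
    fun z => Finset.sum_nonneg (fun r _ => Finset.sum_nonneg (fun s _ => htnn r s z))
  have hpR_alt : ∀ r, pR r = ∑ z, tRZ r z := by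
    intro r
    show (∑ s, p2 r s) = ∑ z, ∑ s, t r s z
    rw [Finset.sum_congr rfl (fun s (_ : s ∈ Finset.univ) => hp2 r s)]
    exact Finset.sum_comm
  have hpS_alt : ∀ s, pS s = ∑ z, tSZ s z := by
    intro s
    show (∑ r, p2 r s) = ∑ z, ∑ r, t r s z
    rw [Finset.sum_congr rfl (fun r (_ : r ∈ Finset.univ) => hp2 r s)]
    exact Finset.sum_comm
  have htRZ_le : ∀ r z, tRZ r z ≤ pR r := by
    intro r z
    rw [hpR_alt]
    exact Finset.single_le_sum (fun z' _ => htRZnn r z') (Finset.mem_univ z)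
  have htSZ_le : ∀ s z, tSZ s z ≤ pS s := by
    intro s z
    rw [hpS_alt]
    exact Finset.single_le_sum (fun z' _ => htSZnn s z') (Finset.mem_univ z)
  have ht_le_pZ : ∀ r s z, t r s z ≤ pZ z := by
    intro r s z
    calc t r s z ≤ ∑ s', t r s' z :=
          Finset.single_le_sum (fun s' _ => htnn r s' z) (Finset.mem_univ s)
      _ ≤ ∑ r', ∑ s', t r' s' z :=
          Finset.single_le_sum
            (fun r' _ => Finset.sum_nonneg (fun s' _ => htnn r' s' z))
            (Finset.mem_univ r)
  -- positivity transfer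
  have posR : ∀ {r s}, p2 r s ≠ 0 → pR r ≠ 0 :=
    fun {r s} hrs h0 => hrs (le_antisymm (h0 ▸ hp2R r s) (hp2nn r s))
  have posS : ∀ {r s}, p2 r s ≠ 0 → pS s ≠ 0 :=
    fun {r s} hrs h0 => hrs (le_antisymm (h0 ▸ hp2S r s) (hp2nn r s))
  -- conditional distributions of Z given R resp. S
  set g : 𝓡 → 𝒵h → ℝ := fun r z => if pR r = 0 then 0 else tRZ r z / pR r with hg
  set h' : 𝓢 → 𝒵h → ℝ := fun s z => if pS s = 0 then 0 else tSZ s z / pS s with hh'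
  have tRZ_eq : ∀ r z, tRZ r z = pR r * g r z := by
    intro r z
    show tRZ r z = pR r * (if pR r = 0 then 0 else tRZ r z / pR r)
    rcases eq_or_ne (pR r) 0 with h0 | h0
    · rw [if_pos h0, mul_zero]
      exact le_antisymm (h0 ▸ htRZ_le r z) (htRZnn r z)
    · rw [if_neg h0]; field_simp
  have tSZ_eq : ∀ s z, tSZ s z = pS s * h' s z := by
    intro s z
    show tSZ s z = pS s * (if pS s = 0 then 0 else tSZ s z / pS s)
    rcases eq_or_ne (pS s) 0 with h0 | h0
    · rw [if_pos h0, mul_zero]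
      exact le_antisymm (h0 ▸ htSZ_le s z) (htSZnn s z)
    · rw [if_neg h0]; field_simp
  -- along an edge the conditionals agree
  have edge_g : ∀ r s, p2 r s ≠ 0 → ∀ z, g r z = h' s z := by
    intro r s hrs z
    have hpRne : pR r ≠ 0 := posR hrs
    have hpSne : pS s ≠ 0 := posS hrs
    show (if pR r = 0 then 0 else tRZ r z / pR r) =
      (if pS s = 0 then 0 else tSZ s z / pS s)
    rw [if_neg hpRne, if_neg hpSne, div_eq_div_iff hpRne hpSne]
    have e2 := E2' r s z
    have e3 := E3' r s z
    have key : (tRZ r z * pS s) * p2 r s = (tSZ s z * pR r) * p2 r s := by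
      calc (tRZ r z * pS s) * p2 r s = (tRZ r z * p2 r s) * pS s := by ring
        _ = (t r s z * pR r) * pS s := by rw [← e3]
        _ = (t r s z * pS s) * pR r := by ring
        _ = (tSZ s z * p2 r s) * pR r := by rw [e2]
        _ = (tSZ s z * pR r) * p2 r s := by ring
    exact mul_right_cancel₀ hrs key
  have g_const : ∀ r r', Relation.ReflTransGen (relR p2) r r' → g r = g r' := by
    intro r r' h
    induction h with
    | refl => rfl
    | tail _ hbc ih =>
        obtain ⟨s, h1, h2⟩ := hbc
        rw [ih]
        funext z
        rw [edge_g _ _ h1 z, ← edge_g _ _ h2 z]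
  -- the basic factorization via Z
  have pfact : ∀ r s, p2 r s =
      pR r * pS s * (∑ z ∈ Finset.univ.filter (fun z => pZ z ≠ 0),
        g r z * h' s z / pZ z) := by
    intro r s
    rw [hp2 r s, Finset.mul_sum]
    rw [← Finset.sum_filter_add_sum_filter_not Finset.univ (fun z => pZ z ≠ 0)
      (fun z => t r s z)]
    have hzero : ∑ z ∈ Finset.univ.filter (fun z => ¬ pZ z ≠ 0), t r s z = 0 := by
      apply Finset.sum_eq_zero
      intro z hz
      simp only [Finset.mem_filter, not_not] at hz
      exact le_antisymm (hz.2 ▸ ht_le_pZ r s z) (htnn r s z)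
    rw [hzero, add_zero]
    apply Finset.sum_congr rfl
    intro z hz
    simp only [Finset.mem_filter] at hz
    have hpz : pZ z ≠ 0 := hz.2
    have e1 := E1' r s z
    rw [tRZ_eq, tSZ_eq] at e1
    field_simp
    calc t r s z * pZ z = pR r * g r z * (pS s * h' s z) := e1
      _ = pR r * pS s * (g r z * h' s z) := by ring
      _ = pR r * pS s * g r z * h' s z := by ring
  -- the per-component constant
  have pfact2 : ∀ r s, pS s ≠ 0 → sComp p2 s = comp p2 r →
      p2 r s = pR r * pS s * (∑ z ∈ Finset.univ.filter (fun z => pZ z ≠ 0),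
        g r z * g r z / pZ z) := by
    intro r s hpSne hsc
    have hex : ∃ r₀, p2 r₀ s ≠ 0 := by
      by_contra hno
      push_neg at hno
      exact hpSne (Finset.sum_eq_zero (fun r₀ _ => hno r₀))
    obtain ⟨r₀, hr₀⟩ := hex
    have h1 : sComp p2 s = comp p2 r₀ := sComp_eq hr₀
    have h2 : comp p2 r = comp p2 r₀ := by rw [← hsc, h1]
    have h3 : g r = g r₀ := g_const r r₀ (rtg_of_comp_eq h2)
    have h4 : ∀ z, h' s z = g r z := by
      intro z
      rw [h3, edge_g r₀ s hr₀ z]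
    rw [pfact r s]
    congr 1
    apply Finset.sum_congr rfl
    intro z _
    rw [h4 z]
  -- off-component vanishing is sComp_ne_comp_of_zero
  -- PK = PSK
  have PK_eq : ∀ r, (∑ r' ∈ comp p2 r, pR r') =
      ∑ s' ∈ Finset.univ.filter (fun s' => sComp p2 s' = comp p2 r), pS s' := by
    intro r
    have lhs_eq : (∑ r' ∈ comp p2 r, pR r') =
        ∑ r' ∈ comp p2 r, ∑ s', (if sComp p2 s' = comp p2 r then p2 r' s' else 0) := by
      apply Finset.sum_congr rfl
      intro r' hr'
      apply Finset.sum_congr rfl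
      intro s' _
      rcases eq_or_ne (sComp p2 s') (comp p2 r) with hc | hc
      · rw [if_pos hc]
      · rw [if_neg hc]
        apply sComp_ne_comp_of_zero
        rw [comp_eq_of_mem hr']
        exact hc
    rw [lhs_eq, Finset.sum_comm]
    have rhs_eq : ∀ s', (∑ r' ∈ comp p2 r, if sComp p2 s' = comp p2 r then p2 r' s' else 0)
        = if sComp p2 s' = comp p2 r then (∑ r' ∈ comp p2 r, p2 r' s') else 0 := by
      intro s'
      split
      · rfl
      · exact Finset.sum_eq_zero (fun r' _ => rfl)
    rw [Finset.sum_congr rfl (fun s' _ => rhs_eq s'), ← Finset.sum_filter]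
    apply Finset.sum_congr rfl
    intro s' hs'
    simp only [Finset.mem_filter] at hs'
    -- pS s' = ∑_{r' ∈ comp} p2 r' s'
    show (∑ r' ∈ comp p2 r, p2 r' s') = pS s'
    have : pS s' = ∑ r', p2 r' s' := rfl
    rw [this, ← Finset.sum_filter_add_sum_filter_not Finset.univ
      (fun r' => r' ∈ comp p2 r) (fun r' => p2 r' s')]
    have hz : ∑ r' ∈ Finset.univ.filter (fun r' => ¬ r' ∈ comp p2 r), p2 r' s' = 0 := by
      apply Finset.sum_eq_zero
      intro r' hr'
      simp only [Finset.mem_filter] at hr'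
      by_contra hne
      have := sComp_eq hne
      rw [hs'.2] at this
      exact hr'.2 (mem_comp.mpr (rtg_of_comp_eq this))
    rw [hz, add_zero]
    apply Finset.sum_congr
    · ext r''
      simp [Finset.mem_filter]
    · intros; rfl
  -- normalization within a component
  have norm1 : ∀ r, pR r ≠ 0 →
      (∑ z ∈ Finset.univ.filter (fun z => pZ z ≠ 0), g r z * g r z / pZ z) *
        (∑ s' ∈ Finset.univ.filter (fun s' => sComp p2 s' = comp p2 r), pS s') = 1 := by
    intro r hpRne
    have hterm : ∀ s', p2 r s' =
        (if sComp p2 s' = comp p2 r then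
          pR r * pS s' * (∑ z ∈ Finset.univ.filter (fun z => pZ z ≠ 0),
            g r z * g r z / pZ z) else 0) := by
      intro s'
      rcases eq_or_ne (sComp p2 s') (comp p2 r) with hc | hc
      · rw [if_pos hc]
        rcases eq_or_ne (pS s') 0 with h0 | h0
        · rw [h0]
          have : p2 r s' = 0 := le_antisymm (h0 ▸ hp2S r s') (hp2nn r s')
          rw [this]; ring
        · exact pfact2 r s' h0 hc
      · rw [if_neg hc]
        exact sComp_ne_comp_of_zero hc
    have hsum : pR r = (∑ s' ∈ Finset.univ.filter
        (fun s' => sComp p2 s' = comp p2 r), pS s') * pR r *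
        (∑ z ∈ Finset.univ.filter (fun z => pZ z ≠ 0), g r z * g r z / pZ z) := by
      calc pR r = ∑ s', p2 r s' := rfl
        _ = ∑ s', (if sComp p2 s' = comp p2 r then
              pR r * pS s' * (∑ z ∈ Finset.univ.filter (fun z => pZ z ≠ 0),
                g r z * g r z / pZ z) else 0) :=
            Finset.sum_congr rfl (fun s' _ => hterm s')
        _ = ∑ s' ∈ Finset.univ.filter (fun s' => sComp p2 s' = comp p2 r),
              pR r * pS s' * (∑ z ∈ Finset.univ.filter (fun z => pZ z ≠ 0),
                g r z * g r z / pZ z) := (Finset.sum_filter _ _).symm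
        _ = (∑ s' ∈ Finset.univ.filter (fun s' => sComp p2 s' = comp p2 r), pS s') *
              pR r * (∑ z ∈ Finset.univ.filter (fun z => pZ z ≠ 0),
                g r z * g r z / pZ z) := by
            rw [Finset.sum_mul, Finset.sum_mul]
            exact Finset.sum_congr rfl (fun s' _ => by ring)
    have h2 : pR r * ((∑ z ∈ Finset.univ.filter (fun z => pZ z ≠ 0),
        g r z * g r z / pZ z) *
        (∑ s' ∈ Finset.univ.filter (fun s' => sComp p2 s' = comp p2 r), pS s') - 1)
        = 0 := by linear_combination (-1 : ℝ) * hsum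
    rcases mul_eq_zero.mp h2 with h | h
    · exact absurd h hpRne
    · linarith
  -- main conclusion
  intro r s hsc
  show p2 r s * (∑ r' ∈ comp p2 r, pR r') = pR r * pS s
  rcases eq_or_ne (pR r) 0 with h0 | h0
  · have hp20 : p2 r s = 0 := le_antisymm (h0 ▸ hp2R r s) (hp2nn r s)
    rw [hp20, h0, zero_mul, zero_mul]
  rcases eq_or_ne (pS s) 0 with h1 | h1
  · have hp20 : p2 r s = 0 := le_antisymm (h1 ▸ hp2S r s) (hp2nn r s)
    rw [hp20, h1, zero_mul, mul_zero]
  rw [pfact2 r s h1 hsc, PK_eq r]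
  have hn := norm1 r h0
  linear_combination (pR r * pS s) * hn

end Components



section Formulas

variable {Ω : Type*} [MeasurableSpace Ω] {𝓡 𝓢 𝒰 𝒱 𝒵 : Type*}
  [Fintype 𝓡] [Fintype 𝓢] [Fintype 𝒰] [Fintype 𝒱]
  (μ : Measure Ω) [IsFiniteMeasure μ]
  {R : Ω → 𝓡} {S : Ω → 𝓢} {U : Ω → 𝒰} {V : Ω → 𝒱}

/-- Formula for the measure of a joint atom with a composite variable. -/
lemma formula1 (hR : DiscreteRV R) (hS : DiscreteRV S) (hU : DiscreteRV U)
    (hV : DiscreteRV V) (ζ : 𝓡 × 𝓢 × 𝒰 × 𝒱 → 𝒵) (J : 𝓡 → 𝓢 → 𝒰 → 𝒱 → ℝ)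
    (hJ : ∀ r s u v,
      (μ (R ⁻¹' {r} ∩ S ⁻¹' {s} ∩ U ⁻¹' {u} ∩ V ⁻¹' {v})).toReal = J r s u v)
    [DecidableEq 𝒵] (r : 𝓡) (s : 𝓢) (u : 𝒰) (v : 𝒱) (z : 𝒵) :
    (μ (pair R U ⁻¹' {(r, u)} ∩ pair S V ⁻¹' {(s, v)} ∩
      (fun ω => ζ (R ω, S ω, U ω, V ω)) ⁻¹' {z})).toReal =
      if ζ (r, s, u, v) = z then J r s u v else 0 := by
  rcases eq_or_ne (ζ (r, s, u, v)) z with hz | hz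
  · rw [if_pos hz, ← hJ r s u v]
    have hset : pair R U ⁻¹' {(r, u)} ∩ pair S V ⁻¹' {(s, v)} ∩
        (fun ω => ζ (R ω, S ω, U ω, V ω)) ⁻¹' {z} =
        R ⁻¹' {r} ∩ S ⁻¹' {s} ∩ U ⁻¹' {u} ∩ V ⁻¹' {v} := by
      ext ω
      simp only [Set.mem_inter_iff, Set.mem_preimage, Set.mem_singleton_iff, pair,
        Prod.mk.injEq]
      constructor
      · rintro ⟨⟨⟨h1, h2⟩, h3, h4⟩, -⟩
        exact ⟨⟨⟨h1, h3⟩, h2⟩, h4⟩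
      · rintro ⟨⟨⟨h1, h2⟩, h3⟩, h4⟩
        refine ⟨⟨⟨h1, h3⟩, h2, h4⟩, ?_⟩
        rw [h1, h2, h3, h4]
        exact hz
    rw [hset]
  · rw [if_neg hz]
    have hset : pair R U ⁻¹' {(r, u)} ∩ pair S V ⁻¹' {(s, v)} ∩
        (fun ω => ζ (R ω, S ω, U ω, V ω)) ⁻¹' {z} = ∅ := by
      ext ω
      simp only [Set.mem_inter_iff, Set.mem_preimage, Set.mem_singleton_iff, pair,
        Prod.mk.injEq, Set.mem_empty_iff_false, iff_false, not_and]
      rintro ⟨⟨h1, h2⟩, h3, h4⟩ h5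
      rw [h1, h2, h3, h4] at h5
      exact hz h5
    rw [hset]
    simp

lemma formula_XZ (hR : DiscreteRV R) (hS : DiscreteRV S) (hU : DiscreteRV U)
    (hV : DiscreteRV V) (ζ : 𝓡 × 𝓢 × 𝒰 × 𝒱 → 𝒵) (J : 𝓡 → 𝓢 → 𝒰 → 𝒱 → ℝ)
    (hJ : ∀ r s u v,
      (μ (R ⁻¹' {r} ∩ S ⁻¹' {s} ∩ U ⁻¹' {u} ∩ V ⁻¹' {v})).toReal = J r s u v)
    [DecidableEq 𝒵] (r : 𝓡) (u : 𝒰) (z : 𝒵) :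
    (μ (pair R U ⁻¹' {(r, u)} ∩
      (fun ω => ζ (R ω, S ω, U ω, V ω)) ⁻¹' {z})).toReal =
      ∑ s, ∑ v, if ζ (r, s, u, v) = z then J r s u v else 0 := by
  set t := pair R U ⁻¹' {(r, u)} ∩ (fun ω => ζ (R ω, S ω, U ω, V ω)) ⁻¹' {z} with ht
  have htm : MeasurableSet t :=
    ((hR.pair hU) (r, u)).inter ((hR.pair (hS.pair (hU.pair hV))).comp ζ z)
  rw [meas_fiber_real hS htm μ]
  apply Finset.sum_congr rfl
  intro s _
  rw [meas_fiber_real hV (htm.inter (hS s)) μ]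
  apply Finset.sum_congr rfl
  intro v _
  have hset : t ∩ S ⁻¹' {s} ∩ V ⁻¹' {v} =
      pair R U ⁻¹' {(r, u)} ∩ pair S V ⁻¹' {(s, v)} ∩
        (fun ω => ζ (R ω, S ω, U ω, V ω)) ⁻¹' {z} := by
    ext ω
    simp only [ht, Set.mem_inter_iff, Set.mem_preimage, Set.mem_singleton_iff, pair,
      Prod.mk.injEq]
    tauto
  rw [hset]
  exact formula1 μ hR hS hU hV ζ J hJ r s u v z

lemma formula_YZ (hR : DiscreteRV R) (hS : DiscreteRV S) (hU : DiscreteRV U)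
    (hV : DiscreteRV V) (ζ : 𝓡 × 𝓢 × 𝒰 × 𝒱 → 𝒵) (J : 𝓡 → 𝓢 → 𝒰 → 𝒱 → ℝ)
    (hJ : ∀ r s u v,
      (μ (R ⁻¹' {r} ∩ S ⁻¹' {s} ∩ U ⁻¹' {u} ∩ V ⁻¹' {v})).toReal = J r s u v)
    [DecidableEq 𝒵] (s : 𝓢) (v : 𝒱) (z : 𝒵) :
    (μ (pair S V ⁻¹' {(s, v)} ∩
      (fun ω => ζ (R ω, S ω, U ω, V ω)) ⁻¹' {z})).toReal =
      ∑ r, ∑ u, if ζ (r, s, u, v) = z then J r s u v else 0 := by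
  set t := pair S V ⁻¹' {(s, v)} ∩ (fun ω => ζ (R ω, S ω, U ω, V ω)) ⁻¹' {z} with ht
  have htm : MeasurableSet t :=
    ((hS.pair hV) (s, v)).inter ((hR.pair (hS.pair (hU.pair hV))).comp ζ z)
  rw [meas_fiber_real hR htm μ]
  apply Finset.sum_congr rfl
  intro r _
  rw [meas_fiber_real hU (htm.inter (hR r)) μ]
  apply Finset.sum_congr rfl
  intro u _
  have hset : t ∩ R ⁻¹' {r} ∩ U ⁻¹' {u} =
      pair R U ⁻¹' {(r, u)} ∩ pair S V ⁻¹' {(s, v)} ∩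
        (fun ω => ζ (R ω, S ω, U ω, V ω)) ⁻¹' {z} := by
    ext ω
    simp only [ht, Set.mem_inter_iff, Set.mem_preimage, Set.mem_singleton_iff, pair,
      Prod.mk.injEq]
    tauto
  rw [hset]
  exact formula1 μ hR hS hU hV ζ J hJ r s u v z

lemma formula_Z (hR : DiscreteRV R) (hS : DiscreteRV S) (hU : DiscreteRV U)
    (hV : DiscreteRV V) (ζ : 𝓡 × 𝓢 × 𝒰 × 𝒱 → 𝒵) (J : 𝓡 → 𝓢 → 𝒰 → 𝒱 → ℝ)
    (hJ : ∀ r s u v,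
      (μ (R ⁻¹' {r} ∩ S ⁻¹' {s} ∩ U ⁻¹' {u} ∩ V ⁻¹' {v})).toReal = J r s u v)
    [DecidableEq 𝒵] (z : 𝒵) :
    (μ ((fun ω => ζ (R ω, S ω, U ω, V ω)) ⁻¹' {z})).toReal =
      ∑ r, ∑ u, ∑ s, ∑ v, if ζ (r, s, u, v) = z then J r s u v else 0 := by
  set t := (fun ω => ζ (R ω, S ω, U ω, V ω)) ⁻¹' {z} with ht
  have htm : MeasurableSet t := (hR.pair (hS.pair (hU.pair hV))).comp ζ z
  rw [meas_fiber_real hR htm μ]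
  apply Finset.sum_congr rfl
  intro r _
  rw [meas_fiber_real hU (htm.inter (hR r)) μ]
  apply Finset.sum_congr rfl
  intro u _
  have hset : t ∩ R ⁻¹' {r} ∩ U ⁻¹' {u} =
      pair R U ⁻¹' {(r, u)} ∩ (fun ω => ζ (R ω, S ω, U ω, V ω)) ⁻¹' {z} := by
    ext ω
    simp only [ht, Set.mem_inter_iff, Set.mem_preimage, Set.mem_singleton_iff, pair,
      Prod.mk.injEq]
    tauto
  rw [hset]
  exact formula_XZ μ hR hS hU hV ζ J hJ r u z

lemma formula_XY (hR : DiscreteRV R) (hS : DiscreteRV S) (hU : DiscreteRV U)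
    (hV : DiscreteRV V) (J : 𝓡 → 𝓢 → 𝒰 → 𝒱 → ℝ)
    (hJ : ∀ r s u v,
      (μ (R ⁻¹' {r} ∩ S ⁻¹' {s} ∩ U ⁻¹' {u} ∩ V ⁻¹' {v})).toReal = J r s u v)
    (r : 𝓡) (s : 𝓢) (u : 𝒰) (v : 𝒱) :
    (μ (pair R U ⁻¹' {(r, u)} ∩ pair S V ⁻¹' {(s, v)})).toReal = J r s u v := by
  rw [← hJ r s u v]
  have hset : pair R U ⁻¹' {(r, u)} ∩ pair S V ⁻¹' {(s, v)} =
      R ⁻¹' {r} ∩ S ⁻¹' {s} ∩ U ⁻¹' {u} ∩ V ⁻¹' {v} := by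
    ext ω
    simp only [Set.mem_inter_iff, Set.mem_preimage, Set.mem_singleton_iff, pair,
      Prod.mk.injEq]
    tauto
  rw [hset]

lemma formula_Y (hR : DiscreteRV R) (hS : DiscreteRV S) (hU : DiscreteRV U)
    (hV : DiscreteRV V) (J : 𝓡 → 𝓢 → 𝒰 → 𝒱 → ℝ)
    (hJ : ∀ r s u v,
      (μ (R ⁻¹' {r} ∩ S ⁻¹' {s} ∩ U ⁻¹' {u} ∩ V ⁻¹' {v})).toReal = J r s u v)
    (s : 𝓢) (v : 𝒱) :
    (μ (pair S V ⁻¹' {(s, v)})).toReal = ∑ r, ∑ u, J r s u v := by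
  set t := pair S V ⁻¹' {(s, v)} with ht
  have htm : MeasurableSet t := (hS.pair hV) (s, v)
  rw [meas_fiber_real hR htm μ]
  apply Finset.sum_congr rfl
  intro r _
  rw [meas_fiber_real hU (htm.inter (hR r)) μ]
  apply Finset.sum_congr rfl
  intro u _
  rw [← hJ r s u v]
  have hset : t ∩ R ⁻¹' {r} ∩ U ⁻¹' {u} =
      R ⁻¹' {r} ∩ S ⁻¹' {s} ∩ U ⁻¹' {u} ∩ V ⁻¹' {v} := by
    ext ω
    simp only [ht, Set.mem_inter_iff, Set.mem_preimage, Set.mem_singleton_iff, pair,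
      Prod.mk.injEq]
    tauto
  rw [hset]

lemma formula_X (hR : DiscreteRV R) (hS : DiscreteRV S) (hU : DiscreteRV U)
    (hV : DiscreteRV V) (J : 𝓡 → 𝓢 → 𝒰 → 𝒱 → ℝ)
    (hJ : ∀ r s u v,
      (μ (R ⁻¹' {r} ∩ S ⁻¹' {s} ∩ U ⁻¹' {u} ∩ V ⁻¹' {v})).toReal = J r s u v)
    (r : 𝓡) (u : 𝒰) :
    (μ (pair R U ⁻¹' {(r, u)})).toReal = ∑ s, ∑ v, J r s u v := by
  set t := pair R U ⁻¹' {(r, u)} with ht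
  have htm : MeasurableSet t := (hR.pair hU) (r, u)
  rw [meas_fiber_real hS htm μ]
  apply Finset.sum_congr rfl
  intro s _
  rw [meas_fiber_real hV (htm.inter (hS s)) μ]
  apply Finset.sum_congr rfl
  intro v _
  rw [← hJ r s u v]
  have hset : t ∩ S ⁻¹' {s} ∩ V ⁻¹' {v} =
      R ⁻¹' {r} ∩ S ⁻¹' {s} ∩ U ⁻¹' {u} ∩ V ⁻¹' {v} := by
    ext ω
    simp only [ht, Set.mem_inter_iff, Set.mem_preimage, Set.mem_singleton_iff, pair,
      Prod.mk.injEq]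
    tauto
  rw [hset]

end Formulas

section KappaSide

lemma sum2_eq_zero {A B : Type*} [Fintype A] [Fintype B] {F : A → B → ℝ}
    (hnn : ∀ a b, 0 ≤ F a b) (h : (∑ a, ∑ b, F a b) = 0) : ∀ a b, F a b = 0 := by
  intro a b
  have h1 := (Finset.sum_eq_zero_iff_of_nonneg
    (fun a _ => Finset.sum_nonneg (fun b _ => hnn a b))).mp h a (Finset.mem_univ a)
  exact (Finset.sum_eq_zero_iff_of_nonneg (fun b _ => hnn a b)).mp h1 b (Finset.mem_univ b)

lemma sum4_eq_zero {A B C D : Type*} [Fintype A] [Fintype B] [Fintype C] [Fintype D]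
    {F : A → B → C → D → ℝ} (hnn : ∀ a b c d, 0 ≤ F a b c d)
    (h : (∑ a, ∑ b, ∑ c, ∑ d, F a b c d) = 0) : ∀ a b c d, F a b c d = 0 := by
  intro a b c d
  have h1 := sum2_eq_zero (F := fun a b => ∑ c, ∑ d, F a b c d)
    (fun a b => Finset.sum_nonneg (fun c _ => Finset.sum_nonneg (fun d _ => hnn a b c d)))
    h a b
  exact sum2_eq_zero (fun c d => hnn a b c d) h1 c d

/-- Extraction of the common-part structure of an incomplete primitive. -/
lemma kappa_extract {𝒜 ℬ 𝒰 𝒱 : Type} [Fintype 𝒜] [Fintype ℬ] [Fintype 𝒰] [Fintype 𝒱]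
    [Nonempty 𝒜] [Nonempty ℬ] [Nonempty 𝒰] [Nonempty 𝒱]
    (κ : 𝒜 × ℬ → PMF (𝒰 × 𝒱)) (hκ : FailsCompleteness κ) :
    ∃ (𝒵₀ : Type) (_ : Fintype 𝒵₀) (_ : DecidableEq 𝒵₀) (W : 𝒜 × ℬ × 𝒰 × 𝒱 → 𝒵₀),
      (∀ a a' b u u' v, (κ (a, b) (u, v)).toReal ≠ 0 → (κ (a', b) (u', v)).toReal ≠ 0 →
        W (a, b, u, v) = W (a', b, u', v)) ∧
      (∀ a b b' u v v', (κ (a, b) (u, v)).toReal ≠ 0 → (κ (a, b') (u, v')).toReal ≠ 0 →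
        W (a, b, u, v) = W (a, b', u, v')) ∧
      (∀ (w : 𝒵₀) (a a' : 𝒜) (b b' : ℬ) (u u' : 𝒰) (v v' : 𝒱),
        (if W (a, b', u, v') = w then (κ (a, b') (u, v')).toReal else 0) *
        (if W (a', b, u', v) = w then (κ (a', b) (u', v)).toReal else 0) =
        (if W (a, b, u, v) = w then (κ (a, b) (u, v)).toReal else 0) *
        (if W (a', b', u', v') = w then (κ (a', b') (u', v')).toReal else 0)) := by
  classical
  letI mΩ' : MeasurableSpace (𝒜 × ℬ × 𝒰 × 𝒱) := ⊤
  set c0 : ℝ≥0∞ := ((Fintype.card 𝒜 : ℝ≥0∞) * (Fintype.card ℬ : ℝ≥0∞))⁻¹ with hc0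
  have hcard𝒜 : (Fintype.card 𝒜 : ℝ≥0∞) ≠ 0 := by simp [Fintype.card_ne_zero]
  have hcardℬ : (Fintype.card ℬ : ℝ≥0∞) ≠ 0 := by simp [Fintype.card_ne_zero]
  have hcprod_ne : (Fintype.card 𝒜 : ℝ≥0∞) * (Fintype.card ℬ : ℝ≥0∞) ≠ 0 :=
    mul_ne_zero hcard𝒜 hcardℬ
  have hcprod_top : (Fintype.card 𝒜 : ℝ≥0∞) * (Fintype.card ℬ : ℝ≥0∞) ≠ ⊤ :=
    ENNReal.mul_ne_top (ENNReal.natCast_ne_top _) (ENNReal.natCast_ne_top _)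
  have hc0top : c0 ≠ ⊤ := by rw [hc0]; exact ENNReal.inv_ne_top.mpr hcprod_ne
  have hc0ne : c0 ≠ 0 := by rw [hc0]; exact ENNReal.inv_ne_zero.mpr hcprod_top
  have hκ1 : ∀ a b, (∑ u, ∑ v, κ (a, b) (u, v)) = 1 := by
    intro a b
    have := (κ (a, b)).tsum_coe
    rw [tsum_fintype, Fintype.sum_prod_type] at this
    exact this
  have innc : ∀ a b, (∑ u, ∑ v, c0 * κ (a, b) (u, v)) = c0 := by
    intro a b
    have hv : ∀ u, (∑ v, c0 * κ (a, b) (u, v)) = c0 * ∑ v, κ (a, b) (u, v) :=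
      fun u => (Finset.mul_sum _ _ _).symm
    rw [Finset.sum_congr rfl (fun u _ => hv u), ← Finset.mul_sum, hκ1 a b, mul_one]
  have hsum1 : (∑ x : 𝒜 × ℬ × 𝒰 × 𝒱, c0 * κ (x.1, x.2.1) (x.2.2.1, x.2.2.2)) = 1 := by
    simp only [Fintype.sum_prod_type]
    rw [Finset.sum_congr rfl (fun a (_ : a ∈ Finset.univ) =>
      Finset.sum_congr rfl (fun b (_ : b ∈ Finset.univ) => innc a b))]
    simp only [Finset.sum_const, Finset.card_univ, nsmul_eq_mul]
    rw [← mul_assoc, hc0]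
    exact ENNReal.mul_inv_cancel hcprod_ne hcprod_top
  set P' : PMF (𝒜 × ℬ × 𝒰 × 𝒱) :=
    PMF.ofFintype (fun x => c0 * κ (x.1, x.2.1) (x.2.2.1, x.2.2.2)) hsum1 with hP'
  set μ' : Measure (𝒜 × ℬ × 𝒰 × 𝒱) := P'.toMeasure with hμ'
  haveI hprob : IsProbabilityMeasure μ' := PMF.toMeasure.isProbabilityMeasure P'
  have hμs : ∀ s : Set (𝒜 × ℬ × 𝒰 × 𝒱),
      μ' s = ∑ x, if x ∈ s then c0 * κ (x.1, x.2.1) (x.2.2.1, x.2.2.2) else 0 := by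
    intro s
    rw [hμ', PMF.toMeasure_apply P' MeasurableSpace.measurableSet_top, tsum_fintype]
    apply Finset.sum_congr rfl
    intro x _
    rw [Set.indicator_apply]
    split
    · rw [hP', PMF.ofFintype_apply]
    · rfl
  have hu : ∀ a b, μ' {ω : 𝒜 × ℬ × 𝒰 × 𝒱 | ω.1 = a ∧ ω.2.1 = b} = c0 := by
    intro a b
    rw [hμs]
    simp only [Set.mem_setOf_eq, Fintype.sum_prod_type]
    have e0 : ∀ a' b', (∑ u, ∑ v, if a' = a ∧ b' = b
        then c0 * κ (a', b') (u, v) else 0) = if a' = a ∧ b' = b then c0 else 0 := by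
      intro a' b'
      split
      · exact innc a' b'
      · simp
    rw [Finset.sum_congr rfl (fun a' _ => Finset.sum_congr rfl (fun b' _ => e0 a' b'))]
    have e1 : ∀ a', (∑ b', if a' = a ∧ b' = b then c0 else 0) =
        if a' = a then c0 else 0 := by
      intro a'
      rcases eq_or_ne a' a with h | h
      · subst h; simp
      · simp [h]
    rw [Finset.sum_congr rfl (fun a' _ => e1 a')]
    simp
  have huniform : ∀ a b, μ' {ω : 𝒜 × ℬ × 𝒰 × 𝒱 | ω.1 = a ∧ ω.2.1 = b} =
      ((Nat.card 𝒜 : ℝ≥0∞) * (Nat.card ℬ : ℝ≥0∞))⁻¹ := by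
    intro a b
    rw [hu a b, hc0]
    simp [Nat.card_eq_fintype_card]
  have hpoint : ∀ x : 𝒜 × ℬ × 𝒰 × 𝒱,
      μ' {x} = c0 * κ (x.1, x.2.1) (x.2.2.1, x.2.2.2) := by
    intro x
    rw [hμs]
    rw [Finset.sum_eq_single x (fun y _ hy => by
        rw [if_neg (by simpa using hy)])
      (fun h => absurd (Finset.mem_univ x) h)]
    simp
  have hgen0 : GeneratedBy μ' κ (fun x => x.1) (fun x => x.2.1) (fun x => x.2.2.1)
      (fun x => x.2.2.2) (fun _ => ()) := by
    intro t a b u v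
    have hset1 : {ω : 𝒜 × ℬ × 𝒰 × 𝒱 | (fun _ => ()) ω = t ∧ ω.1 = a ∧ ω.2.1 = b ∧
        ω.2.2.1 = u ∧ ω.2.2.2 = v} = {(a, b, u, v)} := by
      ext ω
      first
      | (simp [Prod.ext_iff]; tauto)
      | simp [Prod.ext_iff]
    have hset2 : {ω : 𝒜 × ℬ × 𝒰 × 𝒱 | (fun _ => ()) ω = t ∧ ω.1 = a ∧ ω.2.1 = b} =
        {ω : 𝒜 × ℬ × 𝒰 × 𝒱 | ω.1 = a ∧ ω.2.1 = b} := by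
      ext ω; simp
    rw [hset1, hset2, hpoint, hu]
  obtain ⟨𝒵₀, i𝒵₀, W', hWd, h1, h2, h3⟩ :=
    hκ (𝒜 × ℬ × 𝒰 × 𝒱) mΩ' μ' hprob _ _ _ _
      (fun x => MeasurableSpace.measurableSet_top)
      (fun x => MeasurableSpace.measurableSet_top)
      (fun x => MeasurableSpace.measurableSet_top)
      (fun x => MeasurableSpace.measurableSet_top) huniform hgen0
  letI : DecidableEq 𝒵₀ := Classical.decEq _
  set A' : 𝒜 × ℬ × 𝒰 × 𝒱 → 𝒜 := fun x => x.1 with hA'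
  set B' : 𝒜 × ℬ × 𝒰 × 𝒱 → ℬ := fun x => x.2.1 with hB'
  set U' : 𝒜 × ℬ × 𝒰 × 𝒱 → 𝒰 := fun x => x.2.2.1 with hU'
  set V' : 𝒜 × ℬ × 𝒰 × 𝒱 → 𝒱 := fun x => x.2.2.2 with hV'
  have hdA : DiscreteRV A' := fun x => MeasurableSpace.measurableSet_top
  have hdB : DiscreteRV B' := fun x => MeasurableSpace.measurableSet_top
  have hdU : DiscreteRV U' := fun x => MeasurableSpace.measurableSet_top
  have hdV : DiscreteRV V' := fun x => MeasurableSpace.measurableSet_top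
  have hdW : DiscreteRV W' := fun x => MeasurableSpace.measurableSet_top
  have hdX : DiscreteRV (pair A' U') := hdA.pair hdU
  have hdY : DiscreteRV (pair B' V') := hdB.pair hdV
  set k : 𝒜 → ℬ → 𝒰 → 𝒱 → ℝ := fun a b u v => (κ (a, b) (u, v)).toReal with hk
  have hknn : ∀ a b u v, 0 ≤ k a b u v := fun _ _ _ _ => ENNReal.toReal_nonneg
  set c0r : ℝ := c0.toReal with hc0r
  have hc0rne : c0r ≠ 0 := by
    rw [hc0r]
    exact ENNReal.toReal_ne_zero.mpr ⟨hc0ne, hc0top⟩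
  set J : 𝒜 → ℬ → 𝒰 → 𝒱 → ℝ := fun a b u v => c0r * k a b u v with hJdef
  have hJ : ∀ a b u v,
      (μ' (A' ⁻¹' {a} ∩ B' ⁻¹' {b} ∩ U' ⁻¹' {u} ∩ V' ⁻¹' {v})).toReal = J a b u v := by
    intro a b u v
    have hset : A' ⁻¹' {a} ∩ B' ⁻¹' {b} ∩ U' ⁻¹' {u} ∩ V' ⁻¹' {v} =
        ({(a, b, u, v)} : Set (𝒜 × ℬ × 𝒰 × 𝒱)) := by
      ext ω
      simp [hA', hB', hU', hV', Prod.ext_iff]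
      tauto
    rw [hset, hpoint, ENNReal.toReal_mul]
  set KK : 𝒜 → ℬ → 𝒰 → 𝒱 → 𝒵₀ → ℝ :=
    fun a b u v w => if W' (a, b, u, v) = w then k a b u v else 0 with hKK
  have hKKnn : ∀ a b u v w, 0 ≤ KK a b u v w := by
    intro a b u v w
    rw [hKK]
    dsimp only
    split
    · exact hknn a b u v
    · exact le_refl 0
  have hKKle : ∀ a b u v w, KK a b u v w ≤ k a b u v := by
    intro a b u v w
    rw [hKK]
    dsimp only
    split
    · exact le_refl _
    · exact hknn a b u v
  have hsplit : ∀ a b u v w,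
      (if W' (a, b, u, v) = w then J a b u v else 0) = c0r * KK a b u v w := by
    intro a b u v w
    rw [hKK, hJdef]
    dsimp only
    split
    · rfl
    · rw [mul_zero]
  -- real-valued event formulas
  have fXYZ : ∀ (a : 𝒜) (b : ℬ) (u : 𝒰) (v : 𝒱) (w : 𝒵₀),
      (μ' (pair A' U' ⁻¹' {(a, u)} ∩ pair B' V' ⁻¹' {(b, v)} ∩ W' ⁻¹' {w})).toReal =
        if W' (a, b, u, v) = w then J a b u v else 0 :=
    fun a b u v w => formula1 μ' hdA hdB hdU hdV W' J hJ a b u v w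
  have fXZ : ∀ (a : 𝒜) (u : 𝒰) (w : 𝒵₀),
      (μ' (pair A' U' ⁻¹' {(a, u)} ∩ W' ⁻¹' {w})).toReal =
        ∑ b, ∑ v, if W' (a, b, u, v) = w then J a b u v else 0 :=
    fun a u w => formula_XZ μ' hdA hdB hdU hdV W' J hJ a u w
  have fYZ : ∀ (b : ℬ) (v : 𝒱) (w : 𝒵₀),
      (μ' (pair B' V' ⁻¹' {(b, v)} ∩ W' ⁻¹' {w})).toReal =
        ∑ a, ∑ u, if W' (a, b, u, v) = w then J a b u v else 0 :=
    fun b v w => formula_YZ μ' hdA hdB hdU hdV W' J hJ b v w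
  have fZ : ∀ (w : 𝒵₀),
      (μ' (W' ⁻¹' {w})).toReal =
        ∑ a, ∑ u, ∑ b, ∑ v, if W' (a, b, u, v) = w then J a b u v else 0 :=
    fun w => formula_Z μ' hdA hdB hdU hdV W' J hJ w
  have fXY : ∀ (a : 𝒜) (b : ℬ) (u : 𝒰) (v : 𝒱),
      (μ' (pair A' U' ⁻¹' {(a, u)} ∩ pair B' V' ⁻¹' {(b, v)})).toReal = J a b u v :=
    fun a b u v => formula_XY μ' hdA hdB hdU hdV J hJ a b u v
  have fY : ∀ (b : ℬ) (v : 𝒱),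
      (μ' (pair B' V' ⁻¹' {(b, v)})).toReal = ∑ a, ∑ u, J a b u v :=
    fun b v => formula_Y μ' hdA hdB hdU hdV J hJ b v
  have fX : ∀ (a : 𝒜) (u : 𝒰),
      (μ' (pair A' U' ⁻¹' {(a, u)})).toReal = ∑ b, ∑ v, J a b u v :=
    fun a u => formula_X μ' hdA hdB hdU hdV J hJ a u
  -- G1 in J-form
  have hfac1 := (cmi_eq_zero_iff μ' hdX hdY hdW).mp h1
  have G1 : ∀ (w : 𝒵₀) a b u v,
      (if W' (a, b, u, v) = w then J a b u v else 0) *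
        (∑ a', ∑ u', ∑ b', ∑ v', if W' (a', b', u', v') = w then J a' b' u' v' else 0) =
      (∑ b', ∑ v', if W' (a, b', u, v') = w then J a b' u v' else 0) *
        (∑ a', ∑ u', if W' (a', b, u', v) = w then J a' b u' v else 0) := by
    intro w a b u v
    have h := hfac1 (a, u) (b, v) w
    rw [fXYZ, fZ, fXZ, fYZ] at h
    exact h
  -- D2 : on the support, W is determined by the (b,v) part
  have hfac2 := (cmi_eq_zero_iff μ' hdW hdX hdY).mp h2
  have hJne : ∀ a b u v, k a b u v ≠ 0 → J a b u v ≠ 0 := by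
    intro a b u v hkk
    exact mul_ne_zero hc0rne hkk
  have hJnn : ∀ a b u v, 0 ≤ J a b u v := by
    intro a b u v
    have : (0 : ℝ) ≤ c0r := ENNReal.toReal_nonneg
    exact mul_nonneg this (hknn a b u v)
  have D2 : ∀ a a' b u u' v, k a b u v ≠ 0 → k a' b u' v ≠ 0 →
      W' (a, b, u, v) = W' (a', b, u', v) := by
    intro a a' b u u' v hk1 hk2
    have hw : W' (a, b, u, v) = W' (a, b, u, v) := rfl
    have h := hfac2 (W' (a, b, u, v)) (a, u) (b, v)
    have hs1 : W' ⁻¹' {W' (a, b, u, v)} ∩ pair A' U' ⁻¹' {(a, u)} ∩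
        pair B' V' ⁻¹' {(b, v)} =
        pair A' U' ⁻¹' {(a, u)} ∩ pair B' V' ⁻¹' {(b, v)} ∩ W' ⁻¹' {W' (a, b, u, v)} := by
      ext ω
      simp only [Set.mem_inter_iff]
      tauto
    have hs2 : W' ⁻¹' {W' (a, b, u, v)} ∩ pair B' V' ⁻¹' {(b, v)} =
        pair B' V' ⁻¹' {(b, v)} ∩ W' ⁻¹' {W' (a, b, u, v)} := Set.inter_comm _ _
    rw [hs1, hs2] at h
    rw [fXYZ, fY, fYZ, fXY] at h
    rw [if_pos hw] at h
    have hkey : (∑ a'', ∑ u'', J a'' b u'' v) =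
        ∑ a'', ∑ u'', if W' (a'', b, u'', v) = W' (a, b, u, v)
          then J a'' b u'' v else 0 := by
      have := mul_left_cancel₀ (hJne a b u v hk1) (h.trans (mul_comm _ _))
      exact this
    have hz : (∑ a'', ∑ u'', (J a'' b u'' v -
        if W' (a'', b, u'', v) = W' (a, b, u, v) then J a'' b u'' v else 0)) = 0 := by
      simp only [Finset.sum_sub_distrib]
      rw [hkey]
      ring
    have hzz : J a' b u' v - (if W' (a', b, u', v) = W' (a, b, u, v)
        then J a' b u' v else 0) = 0 :=
      sum2_eq_zero (F := fun a'' u'' => J a'' b u'' v -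
          if W' (a'', b, u'', v) = W' (a, b, u, v) then J a'' b u'' v else 0)
        (fun a'' u'' => by
          split
          · simp
          · simp [hJnn a'' b u'' v]) hz a' u'
    by_contra hne
    rw [if_neg (fun hh => hne hh.symm), sub_zero] at hzz
    exact hJne a' b u' v hk2 hzz
  -- D3 : symmetric
  have hfac3 := (cmi_eq_zero_iff μ' hdW hdY hdX).mp h3
  have D3 : ∀ a b b' u v v', k a b u v ≠ 0 → k a b' u v' ≠ 0 →
      W' (a, b, u, v) = W' (a, b', u, v') := by
    intro a b b' u v v' hk1 hk2
    have hw : W' (a, b, u, v) = W' (a, b, u, v) := rfl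
    have h := hfac3 (W' (a, b, u, v)) (b, v) (a, u)
    have hs1 : W' ⁻¹' {W' (a, b, u, v)} ∩ pair B' V' ⁻¹' {(b, v)} ∩
        pair A' U' ⁻¹' {(a, u)} =
        pair A' U' ⁻¹' {(a, u)} ∩ pair B' V' ⁻¹' {(b, v)} ∩ W' ⁻¹' {W' (a, b, u, v)} := by
      ext ω
      simp only [Set.mem_inter_iff]
      tauto
    have hs2 : W' ⁻¹' {W' (a, b, u, v)} ∩ pair A' U' ⁻¹' {(a, u)} =
        pair A' U' ⁻¹' {(a, u)} ∩ W' ⁻¹' {W' (a, b, u, v)} := Set.inter_comm _ _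
    have hs3 : pair B' V' ⁻¹' {(b, v)} ∩ pair A' U' ⁻¹' {(a, u)} =
        pair A' U' ⁻¹' {(a, u)} ∩ pair B' V' ⁻¹' {(b, v)} := Set.inter_comm _ _
    rw [hs1, hs2, hs3] at h
    rw [fXYZ, fX, fXZ, fXY] at h
    rw [if_pos hw] at h
    have hkey : (∑ b'', ∑ v'', J a b'' u v'') =
        ∑ b'', ∑ v'', if W' (a, b'', u, v'') = W' (a, b, u, v)
          then J a b'' u v'' else 0 := by
      exact mul_left_cancel₀ (hJne a b u v hk1) (h.trans (mul_comm _ _))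
    have hz : (∑ b'', ∑ v'', (J a b'' u v'' -
        if W' (a, b'', u, v'') = W' (a, b, u, v) then J a b'' u v'' else 0)) = 0 := by
      simp only [Finset.sum_sub_distrib]
      rw [hkey]
      ring
    have hzz : J a b' u v' - (if W' (a, b', u, v') = W' (a, b, u, v)
        then J a b' u v' else 0) = 0 :=
      sum2_eq_zero (F := fun b'' v'' => J a b'' u v'' -
          if W' (a, b'', u, v'') = W' (a, b, u, v) then J a b'' u v'' else 0)
        (fun b'' v'' => by
          split
          · simp
          · simp [hJnn a b'' u v'']) hz b' v'
    by_contra hne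
    rw [if_neg (fun hh => hne hh.symm), sub_zero] at hzz
    exact hJne a b' u v' hk2 hzz
  -- the swap identity, J-form
  have SWAPJ : ∀ (w : 𝒵₀) (a a' : 𝒜) (b b' : ℬ) (u u' : 𝒰) (v v' : 𝒱),
      (if W' (a, b', u, v') = w then J a b' u v' else 0) *
        (if W' (a', b, u', v) = w then J a' b u' v else 0) =
      (if W' (a, b, u, v) = w then J a b u v else 0) *
        (if W' (a', b', u', v') = w then J a' b' u' v' else 0) := by
    intro w a a' b b' u u' v v'
    set m : ℝ := ∑ a'', ∑ u'', ∑ b'', ∑ v'',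
      (if W' (a'', b'', u'', v'') = w then J a'' b'' u'' v'' else 0) with hm
    rcases eq_or_ne m 0 with hm0 | hm0
    · have hz : ∀ a'' u'' b'' v'',
          (if W' (a'', b'', u'', v'') = w then J a'' b'' u'' v'' else 0) = 0 :=
        sum4_eq_zero (F := fun a'' u'' b'' v'' =>
            if W' (a'', b'', u'', v'') = w then J a'' b'' u'' v'' else 0)
          (fun a'' u'' b'' v'' => by
            split
            · exact hJnn a'' b'' u'' v''
            · exact le_refl 0) hm0
      rw [hz a u b' v', hz a' u' b v, hz a u b v, hz a' u' b' v']
    · have e1 := G1 w a b' u v'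
      have e2 := G1 w a' b u' v
      have e3 := G1 w a b u v
      have e4 := G1 w a' b' u' v'
      apply mul_left_cancel₀ (mul_ne_zero hm0 hm0)
      calc (m * m) * ((if W' (a, b', u, v') = w then J a b' u v' else 0) *
            (if W' (a', b, u', v) = w then J a' b u' v else 0))
          = ((if W' (a, b', u, v') = w then J a b' u v' else 0) * m) *
            ((if W' (a', b, u', v) = w then J a' b u' v else 0) * m) := by ring
        _ = ((∑ b'', ∑ v'', if W' (a, b'', u, v'') = w then J a b'' u v'' else 0) *
              (∑ a'', ∑ u'', if W' (a'', b', u'', v') = w then J a'' b' u'' v' else 0)) *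
            ((∑ b'', ∑ v'', if W' (a', b'', u', v'') = w then J a' b'' u' v'' else 0) *
              (∑ a'', ∑ u'', if W' (a'', b, u'', v) = w then J a'' b u'' v else 0)) := by
            rw [hm, e1, e2]
        _ = ((∑ b'', ∑ v'', if W' (a, b'', u, v'') = w then J a b'' u v'' else 0) *
              (∑ a'', ∑ u'', if W' (a'', b, u'', v) = w then J a'' b u'' v else 0)) *
            ((∑ b'', ∑ v'', if W' (a', b'', u', v'') = w then J a' b'' u' v'' else 0) *
              (∑ a'', ∑ u'', if W' (a'', b', u'', v') = w then J a'' b' u'' v' else 0)) := by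
            ring
        _ = ((if W' (a, b, u, v) = w then J a b u v else 0) * m) *
            ((if W' (a', b', u', v') = w then J a' b' u' v' else 0) * m) := by
            rw [hm, e3, e4]
        _ = (m * m) * ((if W' (a, b, u, v) = w then J a b u v else 0) *
            (if W' (a', b', u', v') = w then J a' b' u' v' else 0)) := by ring
  have SWAP : ∀ (w : 𝒵₀) (a a' : 𝒜) (b b' : ℬ) (u u' : 𝒰) (v v' : 𝒱),
      (if W' (a, b', u, v') = w then k a b' u v' else 0) *
        (if W' (a', b, u', v) = w then k a' b u' v else 0) =
      (if W' (a, b, u, v) = w then k a b u v else 0) *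
        (if W' (a', b', u', v') = w then k a' b' u' v' else 0) := by
    intro w a a' b b' u u' v v'
    have hS := SWAPJ w a a' b b' u u' v v'
    have hrw : ∀ (aa : 𝒜) (bb : ℬ) (uu : 𝒰) (vv : 𝒱),
        (if W' (aa, bb, uu, vv) = w then J aa bb uu vv else 0) =
          c0r * (if W' (aa, bb, uu, vv) = w then k aa bb uu vv else 0) := by
      intro aa bb uu vv
      rw [hJdef]
      dsimp only
      split
      · rfl
      · rw [mul_zero]
    rw [hrw, hrw, hrw, hrw] at hS
    have hc2 : c0r * c0r ≠ 0 := mul_ne_zero hc0rne hc0rne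
    apply mul_left_cancel₀ hc2
    linear_combination hS
  exact ⟨𝒵₀, i𝒵₀, inferInstance, W', D2, D3, fun w a a' b b' u u' v v' =>
    SWAP w a a' b b' u u' v v'⟩

end KappaSide

section FinalHelpers

lemma sum_comm4 {A B C D M : Type*} [Fintype A] [Fintype B] [Fintype C] [Fintype D]
    [AddCommMonoid M] (F : A → B → C → D → M) :
    (∑ a, ∑ b, ∑ c, ∑ d, F a b c d) = ∑ c, ∑ d, ∑ a, ∑ b, F a b c d := by
  calc (∑ a, ∑ b, ∑ c, ∑ d, F a b c d)
      = ∑ a, ∑ c, ∑ b, ∑ d, F a b c d :=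
        Finset.sum_congr rfl (fun a _ => Finset.sum_comm)
    _ = ∑ c, ∑ a, ∑ b, ∑ d, F a b c d := Finset.sum_comm
    _ = ∑ c, ∑ a, ∑ d, ∑ b, F a b c d :=
        Finset.sum_congr rfl (fun c _ =>
          Finset.sum_congr rfl (fun a _ => Finset.sum_comm))
    _ = ∑ c, ∑ d, ∑ a, ∑ b, F a b c d :=
        Finset.sum_congr rfl (fun c _ => Finset.sum_comm)

end FinalHelpers

-- PART6 --

/-- If a primitive `κ` fails the completeness condition, `(R,S)` is trivial, and `(U,V)` is
generated by one use of `κ` with inputs `(f∘R, g∘S)` and side information `⟨R,S⟩`, then the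
pair `(⟨R,U⟩, ⟨S,V⟩)` is trivial. -/
theorem stmt9 {Ω : Type*} [MeasurableSpace Ω] (μ : Measure Ω) [IsProbabilityMeasure μ]
    {𝓡 𝓢 𝒜 ℬ 𝒰 𝒱 : Type} [Fintype 𝓡] [Fintype 𝓢]
    [Fintype 𝒜] [Fintype ℬ] [Fintype 𝒰] [Fintype 𝒱]
    [Nonempty 𝓡] [Nonempty 𝓢] [Nonempty 𝒜] [Nonempty ℬ] [Nonempty 𝒰] [Nonempty 𝒱]
    (κ : 𝒜 × ℬ → PMF (𝒰 × 𝒱)) (hκ : FailsCompleteness κ)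
    (R : Ω → 𝓡) (S : Ω → 𝓢) (hR : DiscreteRV R) (hS : DiscreteRV S)
    (htriv : IsTrivialPair μ R S) (f : 𝓡 → 𝒜) (g : 𝓢 → ℬ)
    (U : Ω → 𝒰) (V : Ω → 𝒱) (hU : DiscreteRV U) (hV : DiscreteRV V)
    (hgen : GeneratedBy μ κ (fun ω => f (R ω)) (fun ω => g (S ω)) U V (pair R S)) :
    IsTrivialPair μ (pair R U) (pair S V) := by
  classical
  obtain ⟨𝒵h, i𝒵h, Zh, hZd, hc1, hc2, hc3⟩ := htriv
  letI : Fintype 𝒵h := i𝒵h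
  -- joint distribution of (R, S, Zh)
  set t : 𝓡 → 𝓢 → 𝒵h → ℝ :=
    fun r s z => (μ (R ⁻¹' {r} ∩ S ⁻¹' {s} ∩ Zh ⁻¹' {z})).toReal with htdef
  have htnn : ∀ r s z, 0 ≤ t r s z := fun _ _ _ => ENNReal.toReal_nonneg
  set p2 : 𝓡 → 𝓢 → ℝ := fun r s => (μ (R ⁻¹' {r} ∩ S ⁻¹' {s})).toReal with hp2def
  have hp2t : ∀ r s, p2 r s = ∑ z, t r s z :=
    fun r s => meas_fiber_real hZd ((hR r).inter (hS s)) μ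
  have hp2nn : ∀ r s, 0 ≤ p2 r s := fun _ _ => ENNReal.toReal_nonneg
  -- marginal identities
  have hZm : ∀ z, (μ (Zh ⁻¹' {z})).toReal = ∑ r', ∑ s', t r' s' z := by
    intro z
    rw [meas_fiber_real hR (hZd z) μ]
    apply Finset.sum_congr rfl
    intro r' _
    rw [meas_fiber_real hS ((hZd z).inter (hR r')) μ]
    apply Finset.sum_congr rfl
    intro s' _
    rw [show Zh ⁻¹' {z} ∩ R ⁻¹' {r'} ∩ S ⁻¹' {s'} =
        R ⁻¹' {r'} ∩ S ⁻¹' {s'} ∩ Zh ⁻¹' {z} by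
      ext ω; simp only [Set.mem_inter_iff]; tauto]
  have hRZm : ∀ r z, (μ (R ⁻¹' {r} ∩ Zh ⁻¹' {z})).toReal = ∑ s', t r s' z := by
    intro r z
    rw [meas_fiber_real hS ((hR r).inter (hZd z)) μ]
    apply Finset.sum_congr rfl
    intro s' _
    rw [show R ⁻¹' {r} ∩ Zh ⁻¹' {z} ∩ S ⁻¹' {s'} =
        R ⁻¹' {r} ∩ S ⁻¹' {s'} ∩ Zh ⁻¹' {z} by
      ext ω; simp only [Set.mem_inter_iff]; tauto]
  have hSZm : ∀ s z, (μ (S ⁻¹' {s} ∩ Zh ⁻¹' {z})).toReal = ∑ r', t r' s z := by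
    intro s z
    rw [meas_fiber_real hR ((hS s).inter (hZd z)) μ]
    apply Finset.sum_congr rfl
    intro r' _
    rw [show S ⁻¹' {s} ∩ Zh ⁻¹' {z} ∩ R ⁻¹' {r'} =
        R ⁻¹' {r'} ∩ S ⁻¹' {s} ∩ Zh ⁻¹' {z} by
      ext ω; simp only [Set.mem_inter_iff]; tauto]
  have hZSm : ∀ z s, (μ (Zh ⁻¹' {z} ∩ S ⁻¹' {s})).toReal = ∑ r', t r' s z := by
    intro z s
    rw [Set.inter_comm]
    exact hSZm s z
  have hZRm : ∀ z r, (μ (Zh ⁻¹' {z} ∩ R ⁻¹' {r})).toReal = ∑ s', t r s' z := by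
    intro z r
    rw [Set.inter_comm]
    exact hRZm r z
  have hRm : ∀ r, (μ (R ⁻¹' {r})).toReal = ∑ s', p2 r s' := by
    intro r
    rw [meas_fiber_real hS (hR r) μ]
  have hSm : ∀ s, (μ (S ⁻¹' {s})).toReal = ∑ r', p2 r' s := by
    intro s
    rw [meas_fiber_real hR (hS s) μ]
    apply Finset.sum_congr rfl
    intro r' _
    rw [Set.inter_comm]
  -- the three factorization identities for (R, S, Zh)
  have hfac1 := (cmi_eq_zero_iff μ hR hS hZd).mp hc1
  have E1 : ∀ r s z, t r s z * (∑ r', ∑ s', t r' s' z) =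
      (∑ s', t r s' z) * (∑ r', t r' s z) := by
    intro r s z
    have h := hfac1 r s z
    rw [hZm, hRZm, hSZm] at h
    exact h
  have hfac2 := (cmi_eq_zero_iff μ hZd hR hS).mp hc2
  have E2 : ∀ r s z, t r s z * (∑ r', p2 r' s) = (∑ r', t r' s z) * p2 r s := by
    intro r s z
    have h := hfac2 z r s
    have hset : Zh ⁻¹' {z} ∩ R ⁻¹' {r} ∩ S ⁻¹' {s} =
        R ⁻¹' {r} ∩ S ⁻¹' {s} ∩ Zh ⁻¹' {z} := by
      ext ω
      simp only [Set.mem_inter_iff]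
      tauto
    rw [hset, hSm, hZSm] at h
    exact h
  have hfac3 := (cmi_eq_zero_iff μ hZd hS hR).mp hc3
  have E3 : ∀ r s z, t r s z * (∑ s', p2 r s') = (∑ s', t r s' z) * p2 r s := by
    intro r s z
    have h := hfac3 z s r
    have hset : Zh ⁻¹' {z} ∩ S ⁻¹' {s} ∩ R ⁻¹' {r} =
        R ⁻¹' {r} ∩ S ⁻¹' {s} ∩ Zh ⁻¹' {z} := by
      ext ω
      simp only [Set.mem_inter_iff]
      tauto
    have hset2 : S ⁻¹' {s} ∩ R ⁻¹' {r} = R ⁻¹' {r} ∩ S ⁻¹' {s} := Set.inter_comm _ _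
    rw [hset, hset2, hRm, hZRm] at h
    exact h
  have MF := mainfact t htnn p2 hp2t E1 E2 E3
  -- κ-side structure
  obtain ⟨𝒵₀, i𝒵₀, d𝒵₀, W, D20, D30, SWAP0⟩ := kappa_extract κ hκ
  letI : Fintype 𝒵₀ := i𝒵₀
  letI : DecidableEq 𝒵₀ := d𝒵₀
  set k : 𝒜 → ℬ → 𝒰 → 𝒱 → ℝ := fun a b u v => (κ (a, b) (u, v)).toReal with hkdef
  have D2 : ∀ a a' b u u' v, k a b u v ≠ 0 → k a' b u' v ≠ 0 →
      W (a, b, u, v) = W (a', b, u', v) :=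
    fun a a' b u u' v h1 h2 => D20 a a' b u u' v h1 h2
  have D3 : ∀ a b b' u v v', k a b u v ≠ 0 → k a b' u v' ≠ 0 →
      W (a, b, u, v) = W (a, b', u, v') :=
    fun a b b' u v v' h1 h2 => D30 a b b' u v v' h1 h2
  have SWAP : ∀ (w : 𝒵₀) (a a' : 𝒜) (b b' : ℬ) (u u' : 𝒰) (v v' : 𝒱),
      (if W (a, b', u, v') = w then k a b' u v' else 0) *
      (if W (a', b, u', v) = w then k a' b u' v else 0) =
      (if W (a, b, u, v) = w then k a b u v else 0) *
      (if W (a', b', u', v') = w then k a' b' u' v' else 0) :=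
    fun w a a' b b' u u' v v' => SWAP0 w a a' b b' u u' v v' 
  have hknn : ∀ a b u v, 0 ≤ k a b u v := fun _ _ _ _ => ENNReal.toReal_nonneg
  set J : 𝓡 → 𝓢 → 𝒰 → 𝒱 → ℝ := fun r s u v => p2 r s * k (f r) (g s) u v with hJdef
  have hJnn : ∀ r s u v, 0 ≤ J r s u v :=
    fun r s u v => mul_nonneg (hp2nn r s) (hknn _ _ u v)
  have hJ : ∀ r s u v,
      (μ (R ⁻¹' {r} ∩ S ⁻¹' {s} ∩ U ⁻¹' {u} ∩ V ⁻¹' {v})).toReal = J r s u v := by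
    intro r s u v
    have h := hgen (r, s) (f r) (g s) u v
    have hset1 : {ω | pair R S ω = (r, s) ∧ f (R ω) = f r ∧ g (S ω) = g s ∧
        U ω = u ∧ V ω = v} = R ⁻¹' {r} ∩ S ⁻¹' {s} ∩ U ⁻¹' {u} ∩ V ⁻¹' {v} := by
      ext ω
      simp only [Set.mem_setOf_eq, Set.mem_inter_iff, Set.mem_preimage,
        Set.mem_singleton_iff, pair, Prod.mk.injEq]
      constructor
      · rintro ⟨⟨h1, h2⟩, -, -, h4, h5⟩
        exact ⟨⟨⟨h1, h2⟩, h4⟩, h5⟩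
      · rintro ⟨⟨⟨h1, h2⟩, h4⟩, h5⟩
        exact ⟨⟨h1, h2⟩, by rw [h1], by rw [h2], h4, h5⟩
    have hset2 : {ω | pair R S ω = (r, s) ∧ f (R ω) = f r ∧ g (S ω) = g s} =
        R ⁻¹' {r} ∩ S ⁻¹' {s} := by
      ext ω
      simp only [Set.mem_setOf_eq, Set.mem_inter_iff, Set.mem_preimage,
        Set.mem_singleton_iff, pair, Prod.mk.injEq]
      constructor
      · rintro ⟨⟨h1, h2⟩, -, -⟩
        exact ⟨h1, h2⟩
      · rintro ⟨h1, h2⟩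
        exact ⟨⟨h1, h2⟩, by rw [h1], by rw [h2]⟩
    rw [hset1, hset2] at h
    rw [h, ENNReal.toReal_mul]
  -- the witness
  set ζ : 𝓡 × 𝓢 × 𝒰 × 𝒱 → Finset 𝓡 × 𝒵₀ :=
    fun q => (comp p2 q.1, W (f q.1, g q.2.1, q.2.2.1, q.2.2.2)) with hζdef
  -- real-valued event formulas on Ω
  have fXYZ : ∀ r s u v (z : Finset 𝓡 × 𝒵₀),
      (μ (pair R U ⁻¹' {(r, u)} ∩ pair S V ⁻¹' {(s, v)} ∩
        (fun ω => ζ (R ω, S ω, U ω, V ω)) ⁻¹' {z})).toReal =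
        if ζ (r, s, u, v) = z then J r s u v else 0 :=
    fun r s u v z => formula1 μ hR hS hU hV ζ J hJ r s u v z
  have fXZ : ∀ r u (z : Finset 𝓡 × 𝒵₀),
      (μ (pair R U ⁻¹' {(r, u)} ∩ (fun ω => ζ (R ω, S ω, U ω, V ω)) ⁻¹' {z})).toReal =
        ∑ s', ∑ v', if ζ (r, s', u, v') = z then J r s' u v' else 0 :=
    fun r u z => formula_XZ μ hR hS hU hV ζ J hJ r u z
  have fYZ : ∀ s v (z : Finset 𝓡 × 𝒵₀),
      (μ (pair S V ⁻¹' {(s, v)} ∩ (fun ω => ζ (R ω, S ω, U ω, V ω)) ⁻¹' {z})).toReal =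
        ∑ r', ∑ u', if ζ (r', s, u', v) = z then J r' s u' v else 0 :=
    fun s v z => formula_YZ μ hR hS hU hV ζ J hJ s v z
  have fZ : ∀ (z : Finset 𝓡 × 𝒵₀),
      (μ ((fun ω => ζ (R ω, S ω, U ω, V ω)) ⁻¹' {z})).toReal =
        ∑ r', ∑ u', ∑ s', ∑ v', if ζ (r', s', u', v') = z then J r' s' u' v' else 0 :=
    fun z => formula_Z μ hR hS hU hV ζ J hJ z
  have fXY : ∀ r s u v,
      (μ (pair R U ⁻¹' {(r, u)} ∩ pair S V ⁻¹' {(s, v)})).toReal = J r s u v :=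
    fun r s u v => formula_XY μ hR hS hU hV J hJ r s u v
  have fY : ∀ s v, (μ (pair S V ⁻¹' {(s, v)})).toReal = ∑ r', ∑ u', J r' s u' v :=
    fun s v => formula_Y μ hR hS hU hV J hJ s v
  have fX : ∀ r u, (μ (pair R U ⁻¹' {(r, u)})).toReal = ∑ s', ∑ v', J r s' u v' :=
    fun r u => formula_X μ hR hS hU hV J hJ r u
  -- decompositions of nonzero J
  have hJsplit : ∀ r s u v, J r s u v ≠ 0 → p2 r s ≠ 0 ∧ k (f r) (g s) u v ≠ 0 := by
    intro r s u v h0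
    have h00 : p2 r s * k (f r) (g s) u v ≠ 0 := h0
    exact mul_ne_zero_iff.mp h00
  have hζc : ∀ r s u v (K : Finset 𝓡) (w : 𝒵₀),
      (ζ (r, s, u, v) = (K, w)) ↔ (comp p2 r = K ∧ W (f r, g s, u, v) = w) := by
    intro r s u v K w
    simp [hζdef, Prod.ext_iff]
  have hdX : DiscreteRV (pair R U) := hR.pair hU
  have hdY : DiscreteRV (pair S V) := hS.pair hV
  have hdZs : DiscreteRV (fun ω => ζ (R ω, S ω, U ω, V ω)) :=
    (hR.pair (hS.pair (hU.pair hV))).comp ζ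
  refine ⟨Finset 𝓡 × 𝒵₀, inferInstance, fun ω => ζ (R ω, S ω, U ω, V ω), hdZs, ?_, ?_, ?_⟩
  · -- I[X;Y|Z*] = 0
    apply (cmi_eq_zero_iff μ hdX hdY hdZs).mpr
    rintro ⟨r, u⟩ ⟨s, v⟩ ⟨K, w⟩
    rw [fXYZ, fZ, fXZ, fYZ]
    simp only [hζc]
    by_cases hPK0 : (∑ r'' ∈ K, ∑ s'', p2 r'' s'') = 0
    · have hzero : ∀ r' s' u' v', (if comp p2 r' = K ∧ W (f r', g s', u', v') = w
          then J r' s' u' v' else 0) = 0 := by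
        intro r' s' u' v'
        split
        · next hcond =>
          have hrK : r' ∈ K := hcond.1 ▸ mem_comp_self p2 r'
          have h1 : (∑ s'', p2 r' s'') ≤ ∑ r'' ∈ K, ∑ s'', p2 r'' s'' :=
            Finset.single_le_sum
              (fun r'' _ => Finset.sum_nonneg (fun s'' _ => hp2nn r'' s'')) hrK
          have h2 : p2 r' s' ≤ ∑ s'', p2 r' s'' :=
            Finset.single_le_sum (fun s'' _ => hp2nn r' s'') (Finset.mem_univ s')
          have h3 : p2 r' s' = 0 := le_antisymm (by rw [← hPK0]; linarith)
            (hp2nn r' s')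
          show p2 r' s' * k (f r') (g s') u' v' = 0
          rw [h3, zero_mul]
        · rfl
      rw [hzero r s u v, zero_mul]
      have hC0 : (∑ s', ∑ v', if comp p2 r = K ∧ W (f r, g s', u, v') = w
          then J r s' u v' else 0) = 0 :=
        Finset.sum_eq_zero (fun s' _ => Finset.sum_eq_zero (fun v' _ => hzero r s' u v'))
      rw [hC0, zero_mul]
    · -- the main case: multiply by PK² and use the product structure
      apply mul_right_cancel₀ (b := (∑ r'' ∈ K, ∑ s'', p2 r'' s'') *
        (∑ r'' ∈ K, ∑ s'', p2 r'' s'')) (mul_ne_zero hPK0 hPK0)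
      have hA : ∀ r' s' u' v', (if comp p2 r' = K ∧ W (f r', g s', u', v') = w
          then J r' s' u' v' else 0) * (∑ r'' ∈ K, ∑ s'', p2 r'' s'') =
          (if comp p2 r' = K then (∑ s'', p2 r' s'') else 0) *
          (if sComp p2 s' = K then (∑ r'', p2 r'' s') else 0) *
          (if W (f r', g s', u', v') = w then k (f r') (g s') u' v' else 0) := by
        intro r' s' u' v'
        by_cases hcond : comp p2 r' = K ∧ W (f r', g s', u', v') = w
        · rw [if_pos hcond, if_pos hcond.1, if_pos hcond.2]
          by_cases hsc : sComp p2 s' = K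
          · rw [if_pos hsc]
            have hmf := MF r' s' (hsc.trans hcond.1.symm)
            rw [hcond.1] at hmf
            show p2 r' s' * k (f r') (g s') u' v' * (∑ r'' ∈ K, ∑ s'', p2 r'' s'') = _
            linear_combination k (f r') (g s') u' v' * hmf
          · rw [if_neg hsc]
            have hz : p2 r' s' = 0 :=
              sComp_ne_comp_of_zero (fun hcc => hsc (hcc.trans hcond.1))
            show p2 r' s' * k (f r') (g s') u' v' * _ = _
            rw [hz]
            ring
        · rw [if_neg hcond, zero_mul]
          by_cases h1 : comp p2 r' = K
          · have h2 : W (f r', g s', u', v') ≠ w := fun hh => hcond ⟨h1, hh⟩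
            rw [if_neg h2, mul_zero]
          · rw [if_neg h1, zero_mul, zero_mul]
      have hB : (∑ r', ∑ u', ∑ s', ∑ v', if comp p2 r' = K ∧ W (f r', g s', u', v') = w
          then J r' s' u' v' else 0) * (∑ r'' ∈ K, ∑ s'', p2 r'' s'') =
          ∑ r', ∑ u', ∑ s', ∑ v',
          (if comp p2 r' = K then (∑ s'', p2 r' s'') else 0) *
          (if sComp p2 s' = K then (∑ r'', p2 r'' s') else 0) *
          (if W (f r', g s', u', v') = w then k (f r') (g s') u' v' else 0) := by
        simp only [Finset.sum_mul]
        simp only [hA]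
      have hC : (∑ s', ∑ v', if comp p2 r = K ∧ W (f r, g s', u, v') = w
          then J r s' u v' else 0) * (∑ r'' ∈ K, ∑ s'', p2 r'' s'') =
          ∑ s', ∑ v',
          (if comp p2 r = K then (∑ s'', p2 r s'') else 0) *
          (if sComp p2 s' = K then (∑ r'', p2 r'' s') else 0) *
          (if W (f r, g s', u, v') = w then k (f r) (g s') u v' else 0) := by
        simp only [Finset.sum_mul]
        simp only [hA]
      have hD : (∑ r', ∑ u', if comp p2 r' = K ∧ W (f r', g s, u', v) = w
          then J r' s u' v else 0) * (∑ r'' ∈ K, ∑ s'', p2 r'' s'') =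
          ∑ r', ∑ u',
          (if comp p2 r' = K then (∑ s'', p2 r' s'') else 0) *
          (if sComp p2 s = K then (∑ r'', p2 r'' s) else 0) *
          (if W (f r', g s, u', v) = w then k (f r') (g s) u' v else 0) := by
        simp only [Finset.sum_mul]
        simp only [hA]
      have hterm : ∀ r' u' s' v',
          ((if comp p2 r = K then (∑ s'', p2 r s'') else 0) *
            (if sComp p2 s = K then (∑ r'', p2 r'' s) else 0) *
            (if W (f r, g s, u, v) = w then k (f r) (g s) u v else 0)) *
          ((if comp p2 r' = K then (∑ s'', p2 r' s'') else 0) *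
            (if sComp p2 s' = K then (∑ r'', p2 r'' s') else 0) *
            (if W (f r', g s', u', v') = w then k (f r') (g s') u' v' else 0)) =
          ((if comp p2 r = K then (∑ s'', p2 r s'') else 0) *
            (if sComp p2 s' = K then (∑ r'', p2 r'' s') else 0) *
            (if W (f r, g s', u, v') = w then k (f r) (g s') u v' else 0)) *
          ((if comp p2 r' = K then (∑ s'', p2 r' s'') else 0) *
            (if sComp p2 s = K then (∑ r'', p2 r'' s) else 0) *
            (if W (f r', g s, u', v) = w then k (f r') (g s) u' v else 0)) := by
        intro r' u' s' v'
        have hsw := SWAP w (f r) (f r') (g s) (g s') u u' v v'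
        linear_combination (-(if comp p2 r = K then (∑ s'', p2 r s'') else 0) *
          (if comp p2 r' = K then (∑ s'', p2 r' s'') else 0) *
          (if sComp p2 s = K then (∑ r'', p2 r'' s) else 0) *
          (if sComp p2 s' = K then (∑ r'', p2 r'' s') else 0)) * hsw
      calc ((if comp p2 r = K ∧ W (f r, g s, u, v) = w then J r s u v else 0) *
            (∑ r', ∑ u', ∑ s', ∑ v', if comp p2 r' = K ∧ W (f r', g s', u', v') = w
              then J r' s' u' v' else 0)) *
            ((∑ r'' ∈ K, ∑ s'', p2 r'' s'') * (∑ r'' ∈ K, ∑ s'', p2 r'' s''))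
          = ((if comp p2 r = K ∧ W (f r, g s, u, v) = w then J r s u v else 0) *
              (∑ r'' ∈ K, ∑ s'', p2 r'' s'')) *
            ((∑ r', ∑ u', ∑ s', ∑ v', if comp p2 r' = K ∧ W (f r', g s', u', v') = w
              then J r' s' u' v' else 0) * (∑ r'' ∈ K, ∑ s'', p2 r'' s'')) := by ring
        _ = ((if comp p2 r = K then (∑ s'', p2 r s'') else 0) *
              (if sComp p2 s = K then (∑ r'', p2 r'' s) else 0) *
              (if W (f r, g s, u, v) = w then k (f r) (g s) u v else 0)) *
            (∑ r', ∑ u', ∑ s', ∑ v',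
              (if comp p2 r' = K then (∑ s'', p2 r' s'') else 0) *
              (if sComp p2 s' = K then (∑ r'', p2 r'' s') else 0) *
              (if W (f r', g s', u', v') = w then k (f r') (g s') u' v' else 0)) := by
            rw [hA r s u v, hB]
        _ = ∑ r', ∑ u', ∑ s', ∑ v',
            ((if comp p2 r = K then (∑ s'', p2 r s'') else 0) *
              (if sComp p2 s = K then (∑ r'', p2 r'' s) else 0) *
              (if W (f r, g s, u, v) = w then k (f r) (g s) u v else 0)) *
            ((if comp p2 r' = K then (∑ s'', p2 r' s'') else 0) *
              (if sComp p2 s' = K then (∑ r'', p2 r'' s') else 0) *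
              (if W (f r', g s', u', v') = w then k (f r') (g s') u' v' else 0)) := by
            simp only [Finset.mul_sum]
        _ = ∑ s', ∑ v', ∑ r', ∑ u',
            ((if comp p2 r = K then (∑ s'', p2 r s'') else 0) *
              (if sComp p2 s' = K then (∑ r'', p2 r'' s') else 0) *
              (if W (f r, g s', u, v') = w then k (f r) (g s') u v' else 0)) *
            ((if comp p2 r' = K then (∑ s'', p2 r' s'') else 0) *
              (if sComp p2 s = K then (∑ r'', p2 r'' s) else 0) *
              (if W (f r', g s, u', v) = w then k (f r') (g s) u' v else 0)) := by
            rw [sum_comm4]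
            exact Finset.sum_congr rfl (fun s' _ => Finset.sum_congr rfl (fun v' _ =>
              Finset.sum_congr rfl (fun r' _ => Finset.sum_congr rfl (fun u' _ =>
                hterm r' u' s' v'))))
        _ = (∑ s', ∑ v',
              (if comp p2 r = K then (∑ s'', p2 r s'') else 0) *
              (if sComp p2 s' = K then (∑ r'', p2 r'' s') else 0) *
              (if W (f r, g s', u, v') = w then k (f r) (g s') u v' else 0)) *
            (∑ r', ∑ u',
              (if comp p2 r' = K then (∑ s'', p2 r' s'') else 0) *
              (if sComp p2 s = K then (∑ r'', p2 r'' s) else 0) *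
              (if W (f r', g s, u', v) = w then k (f r') (g s) u' v else 0)) := by
            simp only [Finset.sum_mul, Finset.mul_sum]
            exact (sum_comm4 _).symm
        _ = ((∑ s', ∑ v', if comp p2 r = K ∧ W (f r, g s', u, v') = w
              then J r s' u v' else 0) * (∑ r'' ∈ K, ∑ s'', p2 r'' s'')) *
            ((∑ r', ∑ u', if comp p2 r' = K ∧ W (f r', g s, u', v) = w
              then J r' s u' v else 0) * (∑ r'' ∈ K, ∑ s'', p2 r'' s'')) := by
            rw [hC, hD]
        _ = ((∑ s', ∑ v', if comp p2 r = K ∧ W (f r, g s', u, v') = w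
              then J r s' u v' else 0) *
            (∑ r', ∑ u', if comp p2 r' = K ∧ W (f r', g s, u', v) = w
              then J r' s u' v else 0)) *
            ((∑ r'' ∈ K, ∑ s'', p2 r'' s'') * (∑ r'' ∈ K, ∑ s'', p2 r'' s'')) := by ring
  · -- I[Z*;X|Y] = 0
    apply (cmi_eq_zero_iff μ hdZs hdX hdY).mpr
    rintro ⟨K, w⟩ ⟨r, u⟩ ⟨s, v⟩
    have hs1 : (fun ω => ζ (R ω, S ω, U ω, V ω)) ⁻¹' {(K, w)} ∩
        pair R U ⁻¹' {(r, u)} ∩ pair S V ⁻¹' {(s, v)} =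
        pair R U ⁻¹' {(r, u)} ∩ pair S V ⁻¹' {(s, v)} ∩
        (fun ω => ζ (R ω, S ω, U ω, V ω)) ⁻¹' {(K, w)} := by
      ext ω; simp only [Set.mem_inter_iff]; tauto
    have hs2 : (fun ω => ζ (R ω, S ω, U ω, V ω)) ⁻¹' {(K, w)} ∩
        pair S V ⁻¹' {(s, v)} = pair S V ⁻¹' {(s, v)} ∩
        (fun ω => ζ (R ω, S ω, U ω, V ω)) ⁻¹' {(K, w)} := Set.inter_comm _ _
    rw [hs1, hs2, fXYZ, fY, fYZ, fXY]
    simp only [hζc]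
    rw [Finset.mul_sum, Finset.sum_mul]
    apply Finset.sum_congr rfl
    intro r' _
    rw [Finset.mul_sum, Finset.sum_mul]
    apply Finset.sum_congr rfl
    intro u' _
    rcases eq_or_ne (J r s u v) 0 with h0 | h0
    · rw [h0]
      simp
    · rcases eq_or_ne (J r' s u' v) 0 with h1 | h1
      · rw [h1]
        simp
      · obtain ⟨hp2a, hka⟩ := hJsplit r s u v h0
        obtain ⟨hp2b, hkb⟩ := hJsplit r' s u' v h1
        have hcc : comp p2 r = comp p2 r' := comp_eq_edge hp2a hp2b
        have hWW : W (f r, g s, u, v) = W (f r', g s, u', v) :=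
          D2 (f r) (f r') (g s) u u' v hka hkb
        have hiff : (comp p2 r = K ∧ W (f r, g s, u, v) = w) ↔
            (comp p2 r' = K ∧ W (f r', g s, u', v) = w) := by rw [hcc, hWW]
        rw [if_congr hiff rfl rfl]
        split
        · ring
        · ring
  · -- I[Z*;Y|X] = 0
    apply (cmi_eq_zero_iff μ hdZs hdY hdX).mpr
    rintro ⟨K, w⟩ ⟨s, v⟩ ⟨r, u⟩
    have hs1 : (fun ω => ζ (R ω, S ω, U ω, V ω)) ⁻¹' {(K, w)} ∩
        pair S V ⁻¹' {(s, v)} ∩ pair R U ⁻¹' {(r, u)} =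
        pair R U ⁻¹' {(r, u)} ∩ pair S V ⁻¹' {(s, v)} ∩
        (fun ω => ζ (R ω, S ω, U ω, V ω)) ⁻¹' {(K, w)} := by
      ext ω; simp only [Set.mem_inter_iff]; tauto
    have hs2 : (fun ω => ζ (R ω, S ω, U ω, V ω)) ⁻¹' {(K, w)} ∩
        pair R U ⁻¹' {(r, u)} = pair R U ⁻¹' {(r, u)} ∩
        (fun ω => ζ (R ω, S ω, U ω, V ω)) ⁻¹' {(K, w)} := Set.inter_comm _ _
    have hs3 : pair S V ⁻¹' {(s, v)} ∩ pair R U ⁻¹' {(r, u)} =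
        pair R U ⁻¹' {(r, u)} ∩ pair S V ⁻¹' {(s, v)} := Set.inter_comm _ _
    rw [hs1, hs2, hs3, fXYZ, fX, fXZ, fXY]
    simp only [hζc]
    rw [Finset.mul_sum, Finset.sum_mul]
    apply Finset.sum_congr rfl
    intro s' _
    rw [Finset.mul_sum, Finset.sum_mul]
    apply Finset.sum_congr rfl
    intro v' _
    rcases eq_or_ne (J r s u v) 0 with h0 | h0
    · rw [h0]
      simp
    · rcases eq_or_ne (J r s' u v') 0 with h1 | h1
      · rw [h1]
        simp
      · obtain ⟨hp2a, hka⟩ := hJsplit r s u v h0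
        obtain ⟨hp2b, hkb⟩ := hJsplit r s' u v' h1
        have hWW : W (f r, g s, u, v) = W (f r, g s', u, v') :=
          D3 (f r) (g s) (g s') u v v' hka hkb
        have hiff : (comp p2 r = K ∧ W (f r, g s, u, v) = w) ↔
            (comp p2 r = K ∧ W (f r, g s', u, v') = w) := by rw [hWW]
        rw [if_congr hiff rfl rfl]
        split
        · ring
        · ring


end SecureComputation
end

section
/- Let X and Y be finite-valued random variables on a probability space with values in 𝒳 and 𝒴, and let P denote the law of ⟨X,Y⟩. Say that x ∈ 𝒳 and y ∈ 𝒴 are in the same connected component if they are related by the reflexive-transitive closure of the relation on the disjoint union 𝒳 ⊔ 𝒴 that relates x and y whenever P({(x,y)}) > 0. Then the pair (X,Y) is trivial if and only if there exist functions a : 𝒳 → [0,∞) and b : 𝒴 → [0,∞) such that for every x ∈ 𝒳 and y ∈ 𝒴 lying in the same connected component, P({(x,y)}) = a(x) · b(y). -/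
open MeasureTheory Real
open scoped ENNReal

namespace SecureComputation

variable {Ω : Type*} [MeasurableSpace Ω]

/-- The edge relation on `𝒳 ⊕ 𝒴` of the bipartite graph of the joint law of `(X,Y)`:
`x` and `y` are related whenever `P(X = x ∧ Y = y) > 0`. -/
def edgeRel {𝒳 𝒴 : Type*} (μ : Measure Ω) (X : Ω → 𝒳) (Y : Ω → 𝒴) :
    𝒳 ⊕ 𝒴 → 𝒳 ⊕ 𝒴 → Prop := fun p q =>
  (∃ x y, p = Sum.inl x ∧ q = Sum.inr y ∧ μ {ω | X ω = x ∧ Y ω = y} ≠ 0) ∨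
  (∃ x y, p = Sum.inr y ∧ q = Sum.inl x ∧ μ {ω | X ω = x ∧ Y ω = y} ≠ 0)

/-- `x ∈ 𝒳` and `y ∈ 𝒴` lie in the same connected component of the bipartite graph:
they are related by the reflexive-transitive closure of the edge relation. -/
def SameComponent {𝒳 𝒴 : Type*} (μ : Measure Ω) (X : Ω → 𝒳) (Y : Ω → 𝒴)
    (x : 𝒳) (y : 𝒴) : Prop :=
  Relation.ReflTransGen (edgeRel μ X Y) (Sum.inl x) (Sum.inr y)

section Aux

variable {Ω : Type*} [MeasurableSpace Ω]

/-- Equality case of Gibbs' inequality over a finite index type. -/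
lemma gibbs_eq {ι : Type*} [Fintype ι] (u v : ι → ℝ) (hu : ∀ i, 0 ≤ u i)
    (hv : ∀ i, 0 ≤ v i) (hsupp : ∀ i, u i ≠ 0 → v i ≠ 0)
    (hsum : ∑ i, v i ≤ ∑ i, u i)
    (heq : ∑ i, u i * (Real.log (u i) - Real.log (v i)) = 0) :
    ∀ i, u i = v i := by
  have key : ∀ i, u i - v i ≤ u i * (Real.log (u i) - Real.log (v i)) := by
    intro i
    rcases eq_or_ne (u i) 0 with h0 | h0
    · rw [h0]; simp; exact hv i
    · have hu' : 0 < u i := (hu i).lt_of_ne (Ne.symm h0)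
      have hv' : 0 < v i := (hv i).lt_of_ne (Ne.symm (hsupp i h0))
      have ht : 0 < v i / u i := div_pos hv' hu'
      have hlog : Real.log (v i / u i) ≤ v i / u i - 1 := Real.log_le_sub_one_of_pos ht
      have h1 : u i * Real.log (v i / u i) ≤ u i * (v i / u i - 1) :=
        mul_le_mul_of_nonneg_left hlog (hu i)
      have h2 : u i * (v i / u i - 1) = v i - u i := by field_simp
      have h3 : Real.log (v i / u i) = Real.log (v i) - Real.log (u i) :=
        Real.log_div (ne_of_gt hv') (ne_of_gt hu')
      nlinarith [h1, h2.symm ▸ h1]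
  have hsum2 : ∑ i, (u i - v i) ≤ ∑ i, u i * (Real.log (u i) - Real.log (v i)) :=
    Finset.sum_le_sum fun i _ => key i
  have hsum3 : (0:ℝ) ≤ ∑ i, (u i - v i) := by
    rw [Finset.sum_sub_distrib]; linarith
  have hsum4 : ∑ i, (u i - v i) = ∑ i, u i * (Real.log (u i) - Real.log (v i)) := by
    linarith [heq ▸ hsum2]
  have hterm : ∀ i ∈ Finset.univ, u i - v i = u i * (Real.log (u i) - Real.log (v i)) :=
    (Finset.sum_eq_sum_iff_of_le (fun i _ => key i)).mp hsum4
  intro i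
  have hi := hterm i (Finset.mem_univ i)
  rcases eq_or_ne (u i) 0 with h0 | h0
  · rw [h0] at hi ⊢
    simp at hi
    linarith
  · have hu' : 0 < u i := (hu i).lt_of_ne (Ne.symm h0)
    have hv' : 0 < v i := (hv i).lt_of_ne (Ne.symm (hsupp i h0))
    by_contra hne
    have ht : 0 < v i / u i := div_pos hv' hu'
    have hne1 : v i / u i ≠ 1 := by
      intro h; exact hne ((div_eq_one_iff_eq (ne_of_gt hu')).mp h).symm
    have hlt : Real.log (v i / u i) < v i / u i - 1 :=
      Real.log_lt_sub_one_of_pos ht hne1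
    have h3 : Real.log (v i / u i) = Real.log (v i) - Real.log (u i) :=
      Real.log_div (ne_of_gt hv') (ne_of_gt hu')
    have h4 : u i * Real.log (v i / u i) < u i * (v i / u i - 1) :=
      (mul_lt_mul_iff_right₀ hu').mpr hlt
    have h5 : u i * (v i / u i - 1) = v i - u i := by field_simp
    rw [h3, h5] at h4
    nlinarith [hi]

/-- Decompose a measure over the fibers of a discrete random variable. -/
lemma sum_fiber {β : Type*} [Fintype β] (μ : MeasureTheory.Measure Ω)
    [MeasureTheory.IsProbabilityMeasure μ] {B : Ω → β} (hB : DiscreteRV B)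
    {s : Set Ω} (hs : MeasurableSet s) :
    (μ s).toReal = ∑ b, (μ (s ∩ B ⁻¹' {b})).toReal := by
  have hcov : s = ⋃ b, s ∩ B ⁻¹' {b} := by ext ω; simp
  have hdis : Pairwise (Function.onFun Disjoint fun b => s ∩ B ⁻¹' {b}) := by
    intro b b' hbb'
    simp only [Function.onFun, Set.disjoint_left]
    rintro ω ⟨-, h1⟩ ⟨-, h2⟩
    simp only [Set.mem_preimage, Set.mem_singleton_iff] at h1 h2
    exact hbb' (h1 ▸ h2)
  conv_lhs => rw [hcov]
  rw [MeasureTheory.measure_iUnion hdis (fun b => hs.inter (hB b)), tsum_fintype,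
    ENNReal.toReal_sum (fun b _ => MeasureTheory.measure_ne_top μ _)]

/-- The conditional mutual information as a relative-entropy type sum over the
joint probability mass function. -/
lemma core {α β γ : Type*} [Fintype α] [Fintype β] [Fintype γ]
    (μ : MeasureTheory.Measure Ω) [MeasureTheory.IsProbabilityMeasure μ]
    {A : Ω → α} {B : Ω → β} {C : Ω → γ}
    (hA : DiscreteRV A) (hB : DiscreteRV B) (hC : DiscreteRV C)
    (q : α → β → γ → ℝ)
    (hq : ∀ a b c, q a b c = (μ (A ⁻¹' {a} ∩ B ⁻¹' {b} ∩ C ⁻¹' {c})).toReal) :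
    cmi μ A B C = ∑ a, ∑ b, ∑ c, q a b c *
      (Real.log (q a b c) + Real.log (∑ a', ∑ b', q a' b' c)
        - Real.log (∑ b', q a b' c) - Real.log (∑ a', q a' b c)) := by
  have hAC : ∀ a c, (μ ((pair A C) ⁻¹' {(a,c)})).toReal = ∑ b, q a b c := by
    intro a c
    have hset : (pair A C) ⁻¹' {(a,c)} = A ⁻¹' {a} ∩ C ⁻¹' {c} := by
      ext ω; simp [pair, Prod.ext_iff]
    rw [hset, sum_fiber μ hB ((hA a).inter (hC c))]
    refine Finset.sum_congr rfl fun b _ => ?_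
    rw [hq]
    congr 2
    ext ω
    simp only [Set.mem_inter_iff, Set.mem_preimage, Set.mem_singleton_iff]
    tauto
  have hBC : ∀ b c, (μ ((pair B C) ⁻¹' {(b,c)})).toReal = ∑ a, q a b c := by
    intro b c
    have hset : (pair B C) ⁻¹' {(b,c)} = B ⁻¹' {b} ∩ C ⁻¹' {c} := by
      ext ω; simp [pair, Prod.ext_iff]
    rw [hset, sum_fiber μ hA ((hB b).inter (hC c))]
    refine Finset.sum_congr rfl fun a _ => ?_
    rw [hq]
    congr 2
    ext ω
    simp only [Set.mem_inter_iff, Set.mem_preimage, Set.mem_singleton_iff]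
    tauto
  have hCm : ∀ c, (μ (C ⁻¹' {c})).toReal = ∑ a, ∑ b, q a b c := by
    intro c
    rw [sum_fiber μ hA (hC c)]
    refine Finset.sum_congr rfl fun a _ => ?_
    rw [sum_fiber μ hB ((hC c).inter (hA a))]
    refine Finset.sum_congr rfl fun b _ => ?_
    rw [hq]
    congr 2
    ext ω
    simp only [Set.mem_inter_iff, Set.mem_preimage, Set.mem_singleton_iff]
    tauto
  have hABC : ∀ a b c, (μ ((pair (pair A B) C) ⁻¹' {((a,b),c)})).toReal = q a b c := by
    intro a b c
    rw [hq]
    congr 2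
    ext ω
    simp only [Set.mem_inter_iff, Set.mem_preimage, Set.mem_singleton_iff, pair,
      Prod.ext_iff]
  have eA : ent μ (pair A C) = ∑ a, ∑ b, ∑ c, -(q a b c * Real.log (∑ b', q a b' c)) := by
    rw [ent, tsum_fintype, Fintype.sum_prod_type]
    refine Finset.sum_congr rfl fun a _ => ?_
    rw [Finset.sum_comm]
    refine Finset.sum_congr rfl fun c _ => ?_
    rw [hAC a c, Real.negMulLog, neg_mul, Finset.sum_mul, ← Finset.sum_neg_distrib]
  have eB : ent μ (pair B C) = ∑ a, ∑ b, ∑ c, -(q a b c * Real.log (∑ a', q a' b c)) := by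
    have step1 : ent μ (pair B C)
        = ∑ b, ∑ c, ∑ a, -(q a b c * Real.log (∑ a', q a' b c)) := by
      rw [ent, tsum_fintype, Fintype.sum_prod_type]
      refine Finset.sum_congr rfl fun b _ => ?_
      refine Finset.sum_congr rfl fun c _ => ?_
      rw [hBC b c, Real.negMulLog, neg_mul, Finset.sum_mul, ← Finset.sum_neg_distrib]
    rw [step1]
    rw [show (∑ b, ∑ c, ∑ a, -(q a b c * Real.log (∑ a', q a' b c)))
        = ∑ b, ∑ a, ∑ c, -(q a b c * Real.log (∑ a', q a' b c)) from
      Finset.sum_congr rfl fun b _ => Finset.sum_comm]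
    exact Finset.sum_comm
  have eC : ent μ C = ∑ a, ∑ b, ∑ c, -(q a b c * Real.log (∑ a', ∑ b', q a' b' c)) := by
    have step1 : ent μ C
        = ∑ c, ∑ a, ∑ b, -(q a b c * Real.log (∑ a', ∑ b', q a' b' c)) := by
      rw [ent, tsum_fintype]
      refine Finset.sum_congr rfl fun c _ => ?_
      rw [hCm c, Real.negMulLog, neg_mul, Finset.sum_mul, ← Finset.sum_neg_distrib]
      refine Finset.sum_congr rfl fun a _ => ?_
      rw [Finset.sum_mul, ← Finset.sum_neg_distrib]
    rw [step1]
    rw [show (∑ c, ∑ a, ∑ b, -(q a b c * Real.log (∑ a', ∑ b', q a' b' c)))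
        = ∑ a, ∑ c, ∑ b, -(q a b c * Real.log (∑ a', ∑ b', q a' b' c)) from
      Finset.sum_comm]
    exact Finset.sum_congr rfl fun a _ => Finset.sum_comm
  have eABC : ent μ (pair (pair A B) C)
      = ∑ a, ∑ b, ∑ c, -(q a b c * Real.log (q a b c)) := by
    rw [ent, tsum_fintype, Fintype.sum_prod_type, Fintype.sum_prod_type]
    refine Finset.sum_congr rfl fun a _ => ?_
    refine Finset.sum_congr rfl fun b _ => ?_
    refine Finset.sum_congr rfl fun c _ => ?_
    rw [hABC a b c, Real.negMulLog, neg_mul]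
  rw [cmi, eA, eB, eABC, eC]
  simp only [← Finset.sum_add_distrib, ← Finset.sum_sub_distrib]
  refine Finset.sum_congr rfl fun a _ => ?_
  refine Finset.sum_congr rfl fun b _ => ?_
  refine Finset.sum_congr rfl fun c _ => ?_
  ring

end Aux


lemma edgeRel_symm {𝒳 𝒴 : Type*} (μ : MeasureTheory.Measure Ω) (X : Ω → 𝒳) (Y : Ω → 𝒴) :
    Symmetric (edgeRel μ X Y) := by
  rintro p q (⟨x, y, h1, h2, h3⟩ | ⟨x, y, h1, h2, h3⟩)
  · exact Or.inr ⟨x, y, h2, h1, h3⟩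
  · exact Or.inl ⟨x, y, h2, h1, h3⟩

lemma log_combine {u v w t : ℝ} (hu : 0 < u) (hv : 0 < v) (hw : 0 < w) (ht : 0 < t)
    (h : u * v = w * t) :
    Real.log u + Real.log v - Real.log w - Real.log t = 0 := by
  have h1 : Real.log u + Real.log v = Real.log (u * v) :=
    (Real.log_mul (ne_of_gt hu) (ne_of_gt hv)).symm
  have h2 : Real.log w + Real.log t = Real.log (w * t) :=
    (Real.log_mul (ne_of_gt hw) (ne_of_gt ht)).symm
  rw [h] at h1
  linarith


lemma prod_identity {α β γ : Type*} [Fintype α] [Fintype β] [Fintype γ]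
    (q : α → β → γ → ℝ) (hq : ∀ a b c, 0 ≤ q a b c)
    (hzero : ∑ a, ∑ b, ∑ c, q a b c *
      (Real.log (q a b c) + Real.log (∑ a', ∑ b', q a' b' c)
        - Real.log (∑ b', q a b' c) - Real.log (∑ a', q a' b c)) = 0) :
    ∀ a b c, q a b c * (∑ a', ∑ b', q a' b' c)
      = (∑ b', q a b' c) * (∑ a', q a' b c) := by
  classical
  set mA : α → γ → ℝ := fun a c => ∑ b', q a b' c with hmA
  set mB : β → γ → ℝ := fun b c => ∑ a', q a' b c with hmB
  set mC : γ → ℝ := fun c => ∑ a', ∑ b', q a' b' c with hmC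
  have hmAnn : ∀ a c, 0 ≤ mA a c := fun a c => Finset.sum_nonneg fun b _ => hq a b c
  have hmBnn : ∀ b c, 0 ≤ mB b c := fun b c => Finset.sum_nonneg fun a _ => hq a b c
  have hmCnn : ∀ c, 0 ≤ mC c :=
    fun c => Finset.sum_nonneg fun a _ => Finset.sum_nonneg fun b _ => hq a b c
  have hAleC : ∀ a c, mA a c ≤ mC c := fun a c =>
    Finset.single_le_sum (f := fun a' => ∑ b', q a' b' c)
      (fun a' _ => Finset.sum_nonneg fun b _ => hq a' b c) (Finset.mem_univ a)
  have hsumB : ∀ c, ∑ b, mB b c = mC c := fun c => Finset.sum_comm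
  have hsumA : ∀ c, ∑ a, mA a c = mC c := fun c => rfl
  set u : α × β × γ → ℝ := fun t => q t.1 t.2.1 t.2.2 with hu
  set v : α × β × γ → ℝ := fun t =>
    if mC t.2.2 = 0 then 0 else mA t.1 t.2.2 * mB t.2.1 t.2.2 / mC t.2.2 with hv
  have hunn : ∀ t, 0 ≤ u t := fun t => hq _ _ _
  have hvnn : ∀ t, 0 ≤ v t := by
    intro t
    rw [hv]
    dsimp only
    split
    · exact le_refl 0
    · exact div_nonneg (mul_nonneg (hmAnn _ _) (hmBnn _ _)) (hmCnn _)
  have hposall : ∀ a b c, q a b c ≠ 0 →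
      0 < q a b c ∧ 0 < mA a c ∧ 0 < mB b c ∧ 0 < mC c := by
    intro a b c h0
    have hp : 0 < q a b c := (hq a b c).lt_of_ne (Ne.symm h0)
    have hA : 0 < mA a c :=
      lt_of_lt_of_le hp (Finset.single_le_sum (fun b' _ => hq a b' c) (Finset.mem_univ b))
    have hB : 0 < mB b c :=
      lt_of_lt_of_le hp (Finset.single_le_sum (fun a' _ => hq a' b c) (Finset.mem_univ a))
    exact ⟨hp, hA, hB, lt_of_lt_of_le hA (hAleC a c)⟩
  have hsupp : ∀ t, u t ≠ 0 → v t ≠ 0 := by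
    intro t h0
    obtain ⟨hp, hA, hB, hC⟩ := hposall t.1 t.2.1 t.2.2 h0
    rw [hv]
    dsimp only
    rw [if_neg (ne_of_gt hC)]
    exact ne_of_gt (div_pos (mul_pos hA hB) hC)
  have husum : ∑ t, u t = ∑ c, mC c := by
    calc ∑ t, u t = ∑ a, ∑ s : β × γ, u (a, s) := Fintype.sum_prod_type _
      _ = ∑ a, ∑ b, ∑ c, q a b c :=
          Finset.sum_congr rfl fun a _ => Fintype.sum_prod_type _
      _ = ∑ a, ∑ c, ∑ b, q a b c := Finset.sum_congr rfl fun a _ => Finset.sum_comm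
      _ = ∑ c, ∑ a, ∑ b, q a b c := Finset.sum_comm
      _ = ∑ c, mC c := rfl
  have hvc : ∀ c, mC c ≠ 0 → ∑ a, ∑ b, mA a c * mB b c / mC c = mC c := by
    intro c hc
    have h1 : ∀ a, ∑ b, mA a c * mB b c / mC c = mA a c * mC c / mC c := by
      intro a
      rw [← hsumB c, Finset.mul_sum, Finset.sum_div]
    simp only [h1]
    rw [← Finset.sum_div, ← Finset.sum_mul, hsumA c, mul_div_assoc, div_self hc, mul_one]
  have hvsum : ∑ t, v t = ∑ c, (if mC c = 0 then 0 else mC c) := by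
    calc ∑ t, v t = ∑ a, ∑ s : β × γ, v (a, s) := Fintype.sum_prod_type _
      _ = ∑ a, ∑ b, ∑ c, v (a, (b, c)) :=
          Finset.sum_congr rfl fun a _ => Fintype.sum_prod_type _
      _ = ∑ a, ∑ c, ∑ b, v (a, (b, c)) := Finset.sum_congr rfl fun a _ => Finset.sum_comm
      _ = ∑ c, ∑ a, ∑ b, v (a, (b, c)) := Finset.sum_comm
      _ = ∑ c, (if mC c = 0 then 0 else mC c) := by
          refine Finset.sum_congr rfl fun c _ => ?_
          by_cases hc : mC c = 0
          · rw [if_pos hc]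
            refine Finset.sum_eq_zero fun a _ => Finset.sum_eq_zero fun b _ => ?_
            rw [hv]
            dsimp only
            rw [if_pos hc]
          · rw [if_neg hc, ← hvc c hc]
            refine Finset.sum_congr rfl fun a _ => Finset.sum_congr rfl fun b _ => ?_
            rw [hv]
            dsimp only
            rw [if_neg hc]
  have hsum : ∑ t, v t ≤ ∑ t, u t := by
    rw [husum, hvsum]
    refine Finset.sum_le_sum fun c _ => ?_
    by_cases hc : mC c = 0
    · rw [if_pos hc]; exact hmCnn c
    · rw [if_neg hc]
  have heq : ∑ t, u t * (Real.log (u t) - Real.log (v t)) = 0 := by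
    rw [← hzero]
    calc ∑ t, u t * (Real.log (u t) - Real.log (v t))
        = ∑ a, ∑ s : β × γ, u (a, s) * (Real.log (u (a, s)) - Real.log (v (a, s))) :=
          Fintype.sum_prod_type _
      _ = ∑ a, ∑ b, ∑ c, u (a, (b, c)) * (Real.log (u (a, (b, c))) - Real.log (v (a, (b, c)))) :=
          Finset.sum_congr rfl fun a _ => Fintype.sum_prod_type _
      _ = _ := by
          refine Finset.sum_congr rfl fun a _ => Finset.sum_congr rfl fun b _ =>
            Finset.sum_congr rfl fun c _ => ?_
          by_cases h0 : q a b c = 0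
          · rw [hu, hv]
            dsimp only
            rw [h0, zero_mul, zero_mul]
          · obtain ⟨hp, hA, hB, hC⟩ := hposall a b c h0
            rw [hu, hv]
            dsimp only
            rw [if_neg (ne_of_gt hC)]
            rw [Real.log_div (ne_of_gt (mul_pos hA hB)) (ne_of_gt hC),
              Real.log_mul (ne_of_gt hA) (ne_of_gt hB)]
            ring
  have hcon := gibbs_eq u v hunn hvnn hsupp hsum heq
  intro a b c
  have ht := hcon (a, (b, c))
  rw [hu, hv] at ht
  dsimp only at ht
  by_cases hc : mC c = 0
  · rw [if_pos hc] at ht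
    have hA0 : mA a c = 0 := le_antisymm (hc ▸ hAleC a c) (hmAnn a c)
    show q a b c * mC c = mA a c * mB b c
    rw [ht, hA0, hc, zero_mul, zero_mul]
  · rw [if_neg hc] at ht
    show q a b c * mC c = mA a c * mB b c
    rw [ht, div_mul_cancel₀ _ hc]

lemma backward_dir {Ω : Type*} [MeasurableSpace Ω] (μ : MeasureTheory.Measure Ω)
    [MeasureTheory.IsProbabilityMeasure μ]
    {𝒳 𝒴 : Type} [Fintype 𝒳] [Fintype 𝒴] [Nonempty 𝒳] [Nonempty 𝒴]
    (X : Ω → 𝒳) (Y : Ω → 𝒴) (hX : DiscreteRV X) (hY : DiscreteRV Y)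
    (a : 𝒳 → ℝ) (b : 𝒴 → ℝ)
    (hfac : ∀ (x : 𝒳) (y : 𝒴), SameComponent μ X Y x y →
      (μ {ω | X ω = x ∧ Y ω = y}).toReal = a x * b y) :
    IsTrivialPair μ X Y := by
  classical
  -- the equivalence relation on 𝒳
  set r : 𝒳 → 𝒳 → Prop :=
    fun x x' => Relation.ReflTransGen (edgeRel μ X Y) (Sum.inl x) (Sum.inl x') with hr
  have hsymm : Symmetric (Relation.ReflTransGen (edgeRel μ X Y)) :=
    by haveI : Std.Symm (edgeRel μ X Y) := ⟨edgeRel_symm μ X Y⟩; exact fun _ _ h => Std.Symm.symm _ _ h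
  have hequiv : Equivalence r :=
    ⟨fun _ => Relation.ReflTransGen.refl, fun h => hsymm h, fun h h' => h.trans h'⟩
  set s : Setoid 𝒳 := ⟨r, hequiv⟩ with hs
  haveI : DecidableRel ((· ≈ ·) : 𝒳 → 𝒳 → Prop) := fun _ _ => Classical.dec _
  set Z : Ω → Quotient s := fun ω => Quotient.mk s (X ω) with hZdef
  have hZ : DiscreteRV Z := by
    intro c
    have hset : Z ⁻¹' {c} = ⋃ x ∈ {x | Quotient.mk s x = c}, X ⁻¹' {x} := by
      ext ω; simp [hZdef]
    rw [hset]
    exact MeasurableSet.biUnion (Set.to_countable _) (fun x _ => hX x)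
  set P : 𝒳 → 𝒴 → ℝ := fun x y => (μ (X ⁻¹' {x} ∩ Y ⁻¹' {y})).toReal with hPdef
  set p : 𝒳 → 𝒴 → Quotient s → ℝ :=
    fun x y z => (μ (X ⁻¹' {x} ∩ Y ⁻¹' {y} ∩ Z ⁻¹' {z})).toReal with hpdef
  have hpnn : ∀ x y z, 0 ≤ p x y z := fun _ _ _ => ENNReal.toReal_nonneg
  have F1 : ∀ x y, P x y = if SameComponent μ X Y x y then a x * b y else 0 := by
    intro x y
    by_cases h : SameComponent μ X Y x y
    · rw [if_pos h, ← hfac x y h]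
      rfl
    · rw [if_neg h, hPdef]
      have hμ : μ (X ⁻¹' {x} ∩ Y ⁻¹' {y}) = 0 := by
        by_contra hμ
        exact h (Relation.ReflTransGen.single (Or.inl ⟨x, y, rfl, rfl, hμ⟩))
      simp [hμ]
  have F0 : ∀ x y z, p x y z = if z = Quotient.mk s x then P x y else 0 := by
    intro x y z
    by_cases h : z = Quotient.mk s x
    · rw [if_pos h]
      have hst : X ⁻¹' {x} ∩ Y ⁻¹' {y} ∩ Z ⁻¹' {z} = X ⁻¹' {x} ∩ Y ⁻¹' {y} := by
        ext ω
        simp only [Set.mem_inter_iff, Set.mem_preimage, Set.mem_singleton_iff, hZdef, h]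
        exact ⟨fun hh => hh.1, fun hh => ⟨hh, by rw [hh.1]⟩⟩
      show (μ (X ⁻¹' {x} ∩ Y ⁻¹' {y} ∩ Z ⁻¹' {z})).toReal
        = (μ (X ⁻¹' {x} ∩ Y ⁻¹' {y})).toReal
      rw [hst]
    · rw [if_neg h]
      have hst : X ⁻¹' {x} ∩ Y ⁻¹' {y} ∩ Z ⁻¹' {z} = ∅ := by
        ext ω
        simp only [Set.mem_inter_iff, Set.mem_preimage, Set.mem_singleton_iff, hZdef,
          Set.mem_empty_iff_false, iff_false, not_and]
        rintro ⟨hx, -⟩ hz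
        exact h (by rw [← hz, hx])
      show (μ (X ⁻¹' {x} ∩ Y ⁻¹' {y} ∩ Z ⁻¹' {z})).toReal = 0
      rw [hst]
      simp
  -- relating the relation and components
  have lemB : ∀ x x' y, r x' x → SameComponent μ X Y x y → SameComponent μ X Y x' y :=
    fun x x' y h1 h2 => h1.trans h2
  have lemA : ∀ x x' y, SameComponent μ X Y x' y → SameComponent μ X Y x y → r x' x :=
    fun x x' y h1 h2 => h1.trans (hsymm h2)
  set Bv : 𝒳 → ℝ := fun x => ∑ y', if SameComponent μ X Y x y' then b y' else 0 with hBvdef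
  set Av : 𝒳 → ℝ :=
    fun x => ∑ x', if Quotient.mk s x' = Quotient.mk s x then a x' else 0 with hAvdef
  have hBvcong : ∀ x x', r x' x → Bv x' = Bv x := by
    intro x x' hrel
    refine Finset.sum_congr rfl fun y' _ => ?_
    congr 1
    simp only [eq_iff_iff]
    exact ⟨fun h => lemB x' x y' (hequiv.symm hrel) h, fun h => lemB x x' y' hrel h⟩
  -- marginal computations
  have mXmarg : ∀ x, (∑ y', P x y') = a x * Bv x := by
    intro x
    rw [hBvdef, Finset.mul_sum]
    refine Finset.sum_congr rfl fun y' _ => ?_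
    rw [F1]
    by_cases h : SameComponent μ X Y x y' <;> simp [h]
  have mXZ : ∀ x z, (∑ y', p x y' z) = if z = Quotient.mk s x then a x * Bv x else 0 := by
    intro x z
    by_cases h : z = Quotient.mk s x
    · rw [if_pos h, ← mXmarg x]
      exact Finset.sum_congr rfl fun y' _ => by rw [F0, if_pos h]
    · rw [if_neg h]
      exact Finset.sum_eq_zero fun y' _ => by rw [F0, if_neg h]
  have mYZ : ∀ x y z, z = Quotient.mk s x → SameComponent μ X Y x y →
      (∑ x', p x' y z) = Av x * b y := by
    intro x y z hz hsc
    rw [hAvdef, Finset.sum_mul]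
    refine Finset.sum_congr rfl fun x' _ => ?_
    rw [F0]
    by_cases h : z = Quotient.mk s x'
    · have hq : Quotient.mk s x' = Quotient.mk s x := by rw [← h, hz]
      have hrel : r x' x := Quotient.exact hq
      rw [if_pos h, if_pos hq, F1, if_pos (lemB x x' y hrel hsc)]
    · have hq : ¬ (Quotient.mk s x' = Quotient.mk s x) := by
        intro hc; exact h (by rw [hz, hc])
      rw [if_neg h, if_neg hq, zero_mul]
  have mZ : ∀ x z, z = Quotient.mk s x → (∑ x', ∑ y', p x' y' z) = Av x * Bv x := by
    intro x z hz
    rw [hAvdef, Finset.sum_mul]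
    refine Finset.sum_congr rfl fun x' _ => ?_
    rw [mXZ]
    by_cases h : z = Quotient.mk s x'
    · have hq : Quotient.mk s x' = Quotient.mk s x := by rw [← h, hz]
      have hrel : r x' x := Quotient.exact hq
      rw [if_pos h, if_pos hq, hBvcong x x' hrel]
    · have hq : ¬ (Quotient.mk s x' = Quotient.mk s x) := by
        intro hc; exact h (by rw [hz, hc])
      rw [if_neg h, if_neg hq, zero_mul]
  have mXY : ∀ x y, (∑ z, p x y z) = P x y := by
    intro x y
    have : ∀ z, p x y z = if z = Quotient.mk s x then P x y else 0 := F0 x y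
    simp only [this]
    rw [Finset.sum_ite_eq' Finset.univ (Quotient.mk s x) (fun _ => P x y)]
    simp
  have mY : ∀ x y z, z = Quotient.mk s x → SameComponent μ X Y x y →
      (∑ z', ∑ x', p x' y z') = Av x * b y := by
    intro x y z hz hsc
    rw [Finset.sum_comm]
    rw [hAvdef, Finset.sum_mul]
    refine Finset.sum_congr rfl fun x' _ => ?_
    rw [mXY, F1]
    by_cases h : SameComponent μ X Y x' y
    · have hrel : r x' x := lemA x x' y h hsc
      rw [if_pos h, if_pos (Quotient.sound hrel)]
    · have hq : ¬ (Quotient.mk s x' = Quotient.mk s x) := by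
        intro hc
        exact h (lemB x x' y (Quotient.exact hc) hsc)
      rw [if_neg h, if_neg hq, zero_mul]
  have mX : ∀ x : 𝒳, (∑ z', ∑ y', p x y' z') = a x * Bv x := by
    intro x
    rw [Finset.sum_comm, ← mXmarg x]
    exact Finset.sum_congr rfl fun y' _ => mXY x y'
  -- positivity helpers
  have hppos : ∀ x y z, p x y z ≠ 0 →
      z = Quotient.mk s x ∧ P x y ≠ 0 ∧ SameComponent μ X Y x y := by
    intro x y z h0
    rw [F0] at h0
    by_cases h : z = Quotient.mk s x
    · rw [if_pos h] at h0
      refine ⟨h, h0, ?_⟩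
      by_contra hsc
      rw [F1, if_neg hsc] at h0
      exact h0 rfl
    · rw [if_neg h] at h0; exact absurd rfl h0
  refine ⟨Quotient s, Quotient.fintype s, Z, hZ, ?_, ?_, ?_⟩
  · -- cmi μ X Y Z = 0
    rw [core μ hX hY hZ p (fun _ _ _ => rfl)]
    refine Finset.sum_eq_zero fun x _ => Finset.sum_eq_zero fun y _ =>
      Finset.sum_eq_zero fun z _ => ?_
    by_cases h0 : p x y z = 0
    · rw [h0, zero_mul]
    · obtain ⟨hz, hP0, hsc⟩ := hppos x y z h0
      have hpos : 0 < p x y z := (hpnn x y z).lt_of_ne (Ne.symm h0)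
      have h1 : 0 < ∑ y', p x y' z :=
        lt_of_lt_of_le hpos (Finset.single_le_sum (fun y' _ => hpnn x y' z)
          (Finset.mem_univ y))
      have h2 : 0 < ∑ x', p x' y z :=
        lt_of_lt_of_le hpos (Finset.single_le_sum (fun x' _ => hpnn x' y z)
          (Finset.mem_univ x))
      have h3 : 0 < ∑ x', ∑ y', p x' y' z :=
        lt_of_lt_of_le h1 (Finset.single_le_sum
          (f := fun x' => ∑ y', p x' y' z)
          (fun x' _ => Finset.sum_nonneg fun y' _ => hpnn x' y' z) (Finset.mem_univ x))
      rw [log_combine hpos h3 h1 h2 ?_, mul_zero]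
      rw [mZ x z hz, mXZ x z, if_pos hz, mYZ x y z hz hsc, F0, if_pos hz, F1, if_pos hsc]
      ring
  · -- cmi μ Z X Y = 0
    have hq2 : ∀ z x y, (fun z x y => p x y z) z x y
        = (μ (Z ⁻¹' {z} ∩ X ⁻¹' {x} ∩ Y ⁻¹' {y})).toReal := by
      intro z x y
      simp only [hpdef]
      congr 2
      ext ω
      simp only [Set.mem_inter_iff, Set.mem_preimage, Set.mem_singleton_iff]
      tauto
    rw [core μ hZ hX hY (fun z x y => p x y z) hq2]
    refine Finset.sum_eq_zero fun z _ => Finset.sum_eq_zero fun x _ =>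
      Finset.sum_eq_zero fun y _ => ?_
    by_cases h0 : p x y z = 0
    · rw [h0, zero_mul]
    · obtain ⟨hz, hP0, hsc⟩ := hppos x y z h0
      have hpos : 0 < p x y z := (hpnn x y z).lt_of_ne (Ne.symm h0)
      have h1 : 0 < ∑ x', p x' y z :=
        lt_of_lt_of_le hpos (Finset.single_le_sum (fun x' _ => hpnn x' y z)
          (Finset.mem_univ x))
      have h2 : 0 < ∑ z', p x y z' :=
        lt_of_lt_of_le hpos (Finset.single_le_sum (fun z' _ => hpnn x y z')
          (Finset.mem_univ z))
      have h3 : 0 < ∑ z', ∑ x', p x' y z' :=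
        lt_of_lt_of_le h1 (Finset.single_le_sum
          (f := fun z' => ∑ x', p x' y z')
          (fun z' _ => Finset.sum_nonneg fun x' _ => hpnn x' y z') (Finset.mem_univ z))
      rw [log_combine hpos h3 h1 h2 ?_, mul_zero]
      rw [mY x y z hz hsc, mYZ x y z hz hsc, mXY x y, F0, if_pos hz]
      ring
  · -- cmi μ Z Y X = 0
    have hq3 : ∀ z y x, (fun z y x => p x y z) z y x
        = (μ (Z ⁻¹' {z} ∩ Y ⁻¹' {y} ∩ X ⁻¹' {x})).toReal := by
      intro z y x
      simp only [hpdef]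
      congr 2
      ext ω
      simp only [Set.mem_inter_iff, Set.mem_preimage, Set.mem_singleton_iff]
      tauto
    rw [core μ hZ hY hX (fun z y x => p x y z) hq3]
    refine Finset.sum_eq_zero fun z _ => Finset.sum_eq_zero fun y _ =>
      Finset.sum_eq_zero fun x _ => ?_
    by_cases h0 : p x y z = 0
    · rw [h0, zero_mul]
    · obtain ⟨hz, hP0, hsc⟩ := hppos x y z h0
      have hpos : 0 < p x y z := (hpnn x y z).lt_of_ne (Ne.symm h0)
      have h1 : 0 < ∑ y', p x y' z :=
        lt_of_lt_of_le hpos (Finset.single_le_sum (fun y' _ => hpnn x y' z)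
          (Finset.mem_univ y))
      have h2 : 0 < ∑ z', p x y z' :=
        lt_of_lt_of_le hpos (Finset.single_le_sum (fun z' _ => hpnn x y z')
          (Finset.mem_univ z))
      have h3 : 0 < ∑ z', ∑ y', p x y' z' :=
        lt_of_lt_of_le h1 (Finset.single_le_sum
          (f := fun z' => ∑ y', p x y' z')
          (fun z' _ => Finset.sum_nonneg fun y' _ => hpnn x y' z') (Finset.mem_univ z))
      rw [log_combine hpos h3 h1 h2 ?_, mul_zero]
      rw [mX x, mXZ x z, if_pos hz, mXY x y, F0, if_pos hz]
      ring

/-- The pair `(X,Y)` is trivial if and only if the joint probability masses factor as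
`P({(x,y)}) = a(x)·b(y)` for all `x, y` in the same connected component. -/
theorem stmt11 {Ω : Type*} [MeasurableSpace Ω] (μ : Measure Ω) [IsProbabilityMeasure μ]
    {𝒳 𝒴 : Type} [Fintype 𝒳] [Fintype 𝒴] [Nonempty 𝒳] [Nonempty 𝒴]
    (X : Ω → 𝒳) (Y : Ω → 𝒴) (hX : DiscreteRV X) (hY : DiscreteRV Y) :
    IsTrivialPair μ X Y ↔
      ∃ (a : 𝒳 → ℝ) (b : 𝒴 → ℝ), (∀ x, 0 ≤ a x) ∧ (∀ y, 0 ≤ b y) ∧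
        ∀ (x : 𝒳) (y : 𝒴), SameComponent μ X Y x y →
          (μ {ω | X ω = x ∧ Y ω = y}).toReal = a x * b y := by
  constructor
  · rintro ⟨𝒵, hfin, Z, hZ, h1, h2, h3⟩
    haveI := hfin
    classical
    set p : 𝒳 → 𝒴 → 𝒵 → ℝ :=
      fun x y z => (μ (X ⁻¹' {x} ∩ Y ⁻¹' {y} ∩ Z ⁻¹' {z})).toReal with hpdef
    have hpnn : ∀ x y z, 0 ≤ p x y z := fun _ _ _ => ENNReal.toReal_nonneg
    set P : 𝒳 → 𝒴 → ℝ := fun x y => ∑ z', p x y z' with hP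
    set mX : 𝒳 → ℝ := fun x => ∑ z', ∑ y', p x y' z' with hmX
    set mY : 𝒴 → ℝ := fun y => ∑ z', ∑ x', p x' y z' with hmY
    set mXZ : 𝒳 → 𝒵 → ℝ := fun x z => ∑ y', p x y' z with hmXZ
    set mYZ : 𝒴 → 𝒵 → ℝ := fun y z => ∑ x', p x' y z with hmYZ
    set mZ : 𝒵 → ℝ := fun z => ∑ x', ∑ y', p x' y' z with hmZ
    have I1 : ∀ x y z, p x y z * mZ z = mXZ x z * mYZ y z :=
      prod_identity p hpnn (by rw [← core μ hX hY hZ p (fun _ _ _ => rfl)]; exact h1)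
    have hq2 : ∀ z x y, (fun z x y => p x y z) z x y
        = (μ (Z ⁻¹' {z} ∩ X ⁻¹' {x} ∩ Y ⁻¹' {y})).toReal := by
      intro z x y
      simp only [hpdef]
      congr 2
      ext ω
      simp only [Set.mem_inter_iff, Set.mem_preimage, Set.mem_singleton_iff]
      tauto
    have I2 : ∀ z x y, p x y z * mY y = mYZ y z * P x y :=
      prod_identity (fun z x y => p x y z) (fun _ _ _ => hpnn _ _ _)
        (by rw [← core μ hZ hX hY _ hq2]; exact h2)
    have hq3 : ∀ z y x, (fun z y x => p x y z) z y x
        = (μ (Z ⁻¹' {z} ∩ Y ⁻¹' {y} ∩ X ⁻¹' {x})).toReal := by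
      intro z y x
      simp only [hpdef]
      congr 2
      ext ω
      simp only [Set.mem_inter_iff, Set.mem_preimage, Set.mem_singleton_iff]
      tauto
    have I3 : ∀ z y x, p x y z * mX x = mXZ x z * P x y :=
      prod_identity (fun z y x => p x y z) (fun _ _ _ => hpnn _ _ _)
        (by rw [← core μ hZ hY hX _ hq3]; exact h3)
    have hPnn : ∀ x y, 0 ≤ P x y := fun x y => Finset.sum_nonneg fun z _ => hpnn x y z
    have hPmeas : ∀ x y, (μ {ω | X ω = x ∧ Y ω = y}).toReal = P x y := by
      intro x y
      exact sum_fiber μ hZ ((hX x).inter (hY y))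
    have hPleX : ∀ x y, P x y ≤ mX x := by
      intro x y
      refine Finset.sum_le_sum fun z _ => ?_
      exact Finset.single_le_sum (fun y' _ => hpnn x y' z) (Finset.mem_univ y)
    have hPleY : ∀ x y, P x y ≤ mY y := by
      intro x y
      refine Finset.sum_le_sum fun z _ => ?_
      exact Finset.single_le_sum (fun x' _ => hpnn x' y z) (Finset.mem_univ x)
    have hpleZ : ∀ x y z, p x y z ≤ mZ z := by
      intro x y z
      refine le_trans (Finset.single_le_sum (fun y' _ => hpnn x y' z) (Finset.mem_univ y)) ?_
      exact Finset.single_le_sum (f := fun x' => ∑ y', p x' y' z)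
        (fun x' _ => Finset.sum_nonneg fun y' _ => hpnn x' y' z) (Finset.mem_univ x)
    have hedge_eq : ∀ x y, μ {ω | X ω = x ∧ Y ω = y} ≠ 0 →
        ∀ z, mXZ x z / mX x = mYZ y z / mY y := by
      intro x y hne z
      have hP0 : P x y ≠ 0 := by
        intro h0
        rw [← hPmeas x y] at h0
        rcases (ENNReal.toReal_eq_zero_iff _).mp h0 with h | h
        · exact hne h
        · exact MeasureTheory.measure_ne_top μ _ h
      have hPpos : 0 < P x y := (hPnn x y).lt_of_ne (Ne.symm hP0)
      have hXpos : 0 < mX x := lt_of_lt_of_le hPpos (hPleX x y)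
      have hYpos : 0 < mY y := lt_of_lt_of_le hPpos (hPleY x y)
      have e1 := I3 z y x
      have e2 := I2 z x y
      rw [div_eq_div_iff (ne_of_gt hXpos) (ne_of_gt hYpos)]
      have hcross : P x y * (mXZ x z * mY y) = P x y * (mYZ y z * mX x) := by
        linear_combination mX x * e2 - mY y * e1
      exact mul_left_cancel₀ hP0 hcross
    set F : 𝒳 ⊕ 𝒴 → 𝒵 → ℝ :=
      Sum.elim (fun x z => mXZ x z / mX x) (fun y z => mYZ y z / mY y) with hF
    have hstep : ∀ u v, edgeRel μ X Y u v → F u = F v := by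
      rintro u v (⟨x, y, hu, hv, hne⟩ | ⟨x, y, hu, hv, hne⟩) <;> subst hu <;> subst hv
      · funext z
        exact hedge_eq x y hne z
      · funext z
        exact (hedge_eq x y hne z).symm
    have hpath : ∀ u v, Relation.ReflTransGen (edgeRel μ X Y) u v → F u = F v := by
      intro u v h
      induction h with
      | refl => rfl
      | tail _ e ih => exact ih.trans (hstep _ _ e)
    refine ⟨mX, fun y => mY y * ∑ z, (if mZ z = 0 then 0 else (mYZ y z / mY y)^2 / mZ z),
      ?_, ?_, ?_⟩
    · intro x
      exact Finset.sum_nonneg fun z _ => Finset.sum_nonneg fun y _ => hpnn x y z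
    · intro y
      refine mul_nonneg (Finset.sum_nonneg fun z _ =>
        Finset.sum_nonneg fun x _ => hpnn x y z) (Finset.sum_nonneg fun z _ => ?_)
      by_cases hz : mZ z = 0
      · rw [if_pos hz]
      · rw [if_neg hz]
        refine div_nonneg (sq_nonneg _) ?_
        exact Finset.sum_nonneg fun x' _ => Finset.sum_nonneg fun y' _ => hpnn x' y' z
    · intro x y hsc
      rw [hPmeas x y]
      beta_reduce
      by_cases hx0 : mX x = 0
      · rw [hx0, zero_mul]
        exact le_antisymm (hx0 ▸ hPleX x y) (hPnn x y)
      by_cases hy0 : mY y = 0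
      · rw [hy0, zero_mul, mul_zero]
        exact le_antisymm (hy0 ▸ hPleY x y) (hPnn x y)
      have hFz : ∀ z, mXZ x z / mX x = mYZ y z / mY y :=
        fun z => congrFun (hpath _ _ hsc) z
      have hZnn : ∀ z, 0 ≤ mZ z :=
        fun z => Finset.sum_nonneg fun x' _ => Finset.sum_nonneg fun y' _ => hpnn x' y' z
      have key : ∀ z, p x y z
          = mX x * (mY y * (if mZ z = 0 then 0 else (mYZ y z / mY y)^2 / mZ z)) := by
        intro z
        by_cases hz0 : mZ z = 0
        · rw [if_pos hz0, mul_zero, mul_zero]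
          exact le_antisymm (hz0 ▸ hpleZ x y z) (hpnn x y z)
        · rw [if_neg hz0]
          have e1 := I1 x y z
          have e2 : mXZ x z = mX x * (mYZ y z / mY y) := by
            rw [← hFz z]
            field_simp
          have e3 : p x y z = mXZ x z * mYZ y z / mZ z := by
            rw [eq_div_iff hz0]
            exact e1
          rw [e3, e2]
          field_simp
      calc P x y = ∑ z, p x y z := rfl
        _ = ∑ z, mX x * (mY y * (if mZ z = 0 then 0 else (mYZ y z / mY y)^2 / mZ z)) :=
            Finset.sum_congr rfl fun z _ => key z
        _ = mX x * (mY y * ∑ z, (if mZ z = 0 then 0 else (mYZ y z / mY y)^2 / mZ z)) := by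
            rw [← Finset.mul_sum, ← Finset.mul_sum]
  · rintro ⟨a, b, ha, hb, hfac⟩
    exact backward_dir μ X Y hX hY a b hfac

end SecureComputation
end
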